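/- arXiv:math-ph/0312056 — 5 statements merged into one kernel-verified Lean document; each statement's English description precedes it below -/
import Mathlib

section
/- Let U : [0,∞) → ℝ be continuous, let T ≥ 0, and let z, w ∈ ℂ with z ≠ w. If g : [0,T] → ℂ is a solution of the chordal Löwner equation driven by U with initial value z, and h : [0,T] → ℂ is a solution of the chordal Löwner equation driven by U with initial value w, then g(T) ≠ h(T). In particular the Löwner flow is injective: distinct initial points give distinct values at every time at which both solutions exist. -/
open Set Filter

/-- `g` solves the chordal Löwner equation driven by `U` with initial value `z`
on the time interval `I`. -/
def IsLoewnerSolution (U : ℝ → ℝ) (I : Set ℝ) (z : ℂ) (g : ℝ → ℂ) : Prop :=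
  g 0 = z ∧ (∀ t ∈ I, g t ≠ (U t : ℂ)) ∧
    ∀ t ∈ I, HasDerivWithinAt g (2 / (g t - (U t : ℂ))) I t

/-- The Löwner flow is injective: two solutions of the chordal Löwner equation driven by
the same continuous function with distinct initial values remain distinct at every time
at which both exist. -/
theorem loewner_flow_injective
    (U : ℝ → ℝ) (hU : Continuous U) (T : ℝ) (hT : 0 ≤ T)
    (z w : ℂ) (hzw : z ≠ w) (g h : ℝ → ℂ)
    (hg : IsLoewnerSolution U (Icc 0 T) z g)
    (hh : IsLoewnerSolution U (Icc 0 T) w h) :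
    g T ≠ h T := by
  obtain ⟨hg0, hgne, hgd⟩ := hg
  obtain ⟨hh0, hhne, hhd⟩ := hh
  intro hTeq
  -- continuity of g and h on [0,T]
  have hgc : ContinuousOn g (Icc 0 T) := fun t ht =>
    (hgd t ht).continuousWithinAt
  have hhc : ContinuousOn h (Icc 0 T) := fun t ht =>
    (hhd t ht).continuousWithinAt
  -- the minimum distance to the driver
  set φ : ℝ → ℝ := fun t => min ‖g t - (U t : ℂ)‖ ‖h t - (U t : ℂ)‖ with hφ
  have hφc : ContinuousOn φ (Icc 0 T) := by
    have hUc : ContinuousOn (fun t => (U t : ℂ)) (Icc 0 T) :=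
      (Complex.continuous_ofReal.comp hU).continuousOn
    exact fun x hx => Filter.Tendsto.min ((hgc.sub hUc).norm x hx) ((hhc.sub hUc).norm x hx)
  obtain ⟨t₀, ht₀, hmin⟩ := isCompact_Icc.exists_isMinOn (nonempty_Icc.2 hT) hφc
  set ε : ℝ := φ t₀ with hε
  have hεpos : 0 < ε := by
    have h1 : g t₀ - (U t₀ : ℂ) ≠ 0 := sub_ne_zero.2 (hgne t₀ ht₀)
    have h2 : h t₀ - (U t₀ : ℂ) ≠ 0 := sub_ne_zero.2 (hhne t₀ ht₀)
    exact lt_min (norm_pos_iff.2 h1) (norm_pos_iff.2 h2)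
  -- the Lipschitz field
  set K : NNReal := Real.toNNReal (2 / ε ^ 2) with hK
  set s : ℝ → Set ℂ := fun t => {x | ε ≤ ‖x - (U t : ℂ)‖} with hs
  have hlip : ∀ t, LipschitzOnWith K (fun x : ℂ => 2 / (x - (U t : ℂ))) (s t) := by
    intro t
    apply LipschitzOnWith.of_dist_le_mul
    intro a ha b hb
    have haε : ε ≤ ‖a - (U t : ℂ)‖ := ha
    have hbε : ε ≤ ‖b - (U t : ℂ)‖ := hb
    have ha0 : a - (U t : ℂ) ≠ 0 := by
      intro h0; rw [h0, norm_zero] at haε; linarith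
    have hb0 : b - (U t : ℂ) ≠ 0 := by
      intro h0; rw [h0, norm_zero] at hbε; linarith
    have key : (2 : ℂ) / (a - (U t : ℂ)) - 2 / (b - (U t : ℂ))
        = 2 * (b - a) / ((a - (U t : ℂ)) * (b - (U t : ℂ))) := by
      field_simp
      ring
    rw [dist_eq_norm, key, dist_eq_norm]
    rw [norm_div, norm_mul, norm_mul]
    have h2 : ‖(2 : ℂ)‖ = 2 := by norm_num
    rw [h2]
    rw [hK, Real.coe_toNNReal _ (by positivity)]
    have hpos : 0 < ‖a - (U t : ℂ)‖ * ‖b - (U t : ℂ)‖ :=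
      mul_pos (hεpos.trans_le haε) (hεpos.trans_le hbε)
    rw [div_le_iff₀ hpos]
    have hab : ‖b - a‖ = ‖a - b‖ := norm_sub_rev _ _
    rw [hab]
    have hε2 : ε ^ 2 ≤ ‖a - (U t : ℂ)‖ * ‖b - (U t : ℂ)‖ := by
      calc ε ^ 2 = ε * ε := sq ε
        _ ≤ ‖a - (U t : ℂ)‖ * ‖b - (U t : ℂ)‖ :=
          mul_le_mul haε hbε hεpos.le (norm_nonneg _)
    calc 2 * ‖a - b‖ = 2 / ε ^ 2 * ‖a - b‖ * ε ^ 2 := by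
          field_simp
      _ ≤ 2 / ε ^ 2 * ‖a - b‖ * (‖a - (U t : ℂ)‖ * ‖b - (U t : ℂ)‖) := by
          apply mul_le_mul_of_nonneg_left hε2 (by positivity)
  -- derivatives within Iic t
  have hmem : ∀ t ∈ Ioc (0:ℝ) T, Icc 0 T ∈ nhdsWithin t (Iic t) := by
    intro t ht
    apply mem_nhdsWithin.mpr
    exact ⟨Ioi 0, isOpen_Ioi, ht.1, fun x hx => ⟨hx.1.le, hx.2.trans ht.2⟩⟩
  have hgd' : ∀ t ∈ Ioc (0:ℝ) T,
      HasDerivWithinAt g (2 / (g t - (U t : ℂ))) (Iic t) t := by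
    intro t ht
    exact (hgd t (Ioc_subset_Icc_self ht)).mono_of_mem_nhdsWithin (hmem t ht)
  have hhd' : ∀ t ∈ Ioc (0:ℝ) T,
      HasDerivWithinAt h (2 / (h t - (U t : ℂ))) (Iic t) t := by
    intro t ht
    exact (hhd t (Ioc_subset_Icc_self ht)).mono_of_mem_nhdsWithin (hmem t ht)
  -- membership in s
  have hgs : ∀ t ∈ Ioc (0:ℝ) T, g t ∈ s t := by
    intro t ht
    have h1 : ε ≤ φ t := isMinOn_iff.mp hmin t (Ioc_subset_Icc_self ht)
    exact h1.trans (min_le_left _ _)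
  have hhs : ∀ t ∈ Ioc (0:ℝ) T, h t ∈ s t := by
    intro t ht
    have h1 : ε ≤ φ t := isMinOn_iff.mp hmin t (Ioc_subset_Icc_self ht)
    exact h1.trans (min_le_right _ _)
  -- backward uniqueness
  have heq : EqOn g h (Icc 0 T) :=
    ODE_solution_unique_of_mem_Icc_left (v := fun t x => 2 / (x - (U t : ℂ)))
      (fun t _ => hlip t) hgc hgd' hgs hhc hhd' hhs hTeq
  have : z = w := by
    rw [← hg0, ← hh0]
    exact heq (left_mem_Icc.2 hT)
  exact hzw this
end

section
/- Let U : [0,∞) → ℝ be continuous and let t ≥ 0. Suppose R > 0 is such that for every z ∈ ℂ with Im z > 0 and |z| > R there is a solution g(·, z) : [0,t] → ℂ of the chordal Löwner equation driven by U with initial value z. Then z · (g(t, z) − z) → 2t as z → ∞ within the set {z ∈ ℂ : Im z > 0 and |z| > R}. In particular, the normalized Löwner maps satisfy the expansion g(t,z) = z + 2t/z + O(z^{-2}) as z → ∞, so the hull at time t has capacity 2t. -/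
open Set Filter

/-- Bootstrap bound: the solution stays within distance `1/2` of its start point. -/
lemma loewner_stays_close (U : ℝ → ℝ) (t : ℝ) (ht : 0 ≤ t) (M : ℝ)
    (hM : ∀ s ∈ Icc 0 t, |U s| ≤ M)
    (z : ℂ) (g : ℝ → ℂ) (hg : IsLoewnerSolution U (Icc 0 t) z g)
    (hz : M + 4 * t + 2 ≤ ‖z‖) :
    ∀ s ∈ Icc 0 t, ‖g s - z‖ ≤ 1 / 2 := by
  obtain ⟨hg0, hgne, hgd⟩ := hg
  have hM0 : (0 : ℝ) ≤ M := (abs_nonneg _).trans (hM 0 (left_mem_Icc.2 ht))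
  set r : ℝ := ‖z‖ - M - 1 with hr
  have hr4 : 4 * t + 1 ≤ r := by simp only [hr]; linarith
  have hrpos : 0 < r := by linarith
  have hcont : ContinuousOn g (Icc 0 t) := fun s hs => (hgd s hs).continuousWithinAt
  have hden : ∀ u ∈ Icc 0 t, ‖g u - z‖ ≤ 1 / 2 → r ≤ ‖g u - (U u : ℂ)‖ := by
    intro u hu hφ
    have h1 : ‖z - (U u : ℂ)‖ ≤ ‖g u - (U u : ℂ)‖ + ‖g u - z‖ := by
      have : z - (U u : ℂ) = (g u - (U u : ℂ)) - (g u - z) := by ring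
      rw [this]; exact norm_sub_le _ _
    have h2 : ‖z‖ - M ≤ ‖z - (U u : ℂ)‖ := by
      have h3 : ‖z‖ - ‖(U u : ℂ)‖ ≤ ‖z - (U u : ℂ)‖ := norm_sub_norm_le _ _
      have h4 : ‖(U u : ℂ)‖ ≤ M := by
        rw [Complex.norm_real, Real.norm_eq_abs]; exact hM u hu
      have h5 : ‖z‖ = ‖z‖ := rfl
      linarith
    simp only [hr]; linarith
  by_contra hcon
  push_neg at hcon
  obtain ⟨s₀, hs₀, hφs₀⟩ := hcon
  set E : Set ℝ := {s ∈ Icc 0 t | 1 / 2 ≤ ‖g s - z‖} with hE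
  have hφcont : ContinuousOn (fun u => ‖g u - z‖) (Icc 0 t) :=
    (hcont.sub continuousOn_const).norm
  have hE_closed : IsClosed E := by
    have : E = Icc 0 t ∩ (fun u => ‖g u - z‖) ⁻¹' (Ici (1 / 2)) := by
      ext u; simp [hE, Set.mem_sep_iff, and_comm]
    rw [this]
    exact hφcont.preimage_isClosed_of_isClosed isClosed_Icc isClosed_Ici
  have hE_ne : E.Nonempty := ⟨s₀, hs₀, hφs₀.le⟩
  have hE_bdd : BddBelow E := ⟨0, fun x hx => hx.1.1⟩
  set τ : ℝ := sInf E with hτ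
  have hτE : τ ∈ E := hE_closed.csInf_mem hE_ne hE_bdd
  have hτI : τ ∈ Icc 0 t := hτE.1
  have hτlb : ∀ u ∈ Icc 0 t, u < τ → ‖g u - z‖ < 1 / 2 := by
    intro u hu hlt
    by_contra h
    exact absurd (csInf_le hE_bdd ⟨hu, not_lt.1 h⟩) (not_le.2 hlt)
  have hτpos : 0 < τ := by
    rcases eq_or_lt_of_le hτI.1 with h | h
    · exfalso
      have h2 := hτE.2
      rw [← h, hg0] at h2
      simp at h2
      linarith
    · exact h
  have hφτ : ‖g τ - z‖ ≤ 1 / 2 := by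
    have htend : Tendsto (fun u => ‖g u - z‖) (nhdsWithin τ (Ico 0 τ))
        (nhds ‖g τ - z‖) :=
      (hφcont τ hτI).tendsto.mono_left
        (nhdsWithin_mono τ (fun u hu => ⟨hu.1, hu.2.le.trans hτI.2⟩))
    have hne : (nhdsWithin τ (Ico 0 τ)).NeBot := by
      rw [← mem_closure_iff_nhdsWithin_neBot, closure_Ico hτpos.ne]
      exact right_mem_Icc.2 hτpos.le
    refine le_of_tendsto htend (eventually_nhdsWithin_of_forall ?_)
    intro u hu
    exact (hτlb u ⟨hu.1, hu.2.le.trans hτI.2⟩ hu.2).le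
  have hφle : ∀ u ∈ Icc 0 τ, ‖g u - z‖ ≤ 1 / 2 := by
    intro u hu
    rcases eq_or_lt_of_le hu.2 with h | h
    · rw [h]; exact hφτ
    · exact (hτlb u ⟨hu.1, hu.2.trans hτI.2⟩ h).le
  have hsub : Icc (0:ℝ) τ ⊆ Icc 0 t := Icc_subset_Icc le_rfl hτI.2
  have hmvt : ‖g τ - g 0‖ ≤ 2 / r * ‖τ - 0‖ := by
    refine (convex_Icc 0 τ).norm_image_sub_le_of_norm_hasDerivWithin_le
      (fun u hu => (hgd u (hsub hu)).mono hsub) ?_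
      (left_mem_Icc.2 hτI.1) (right_mem_Icc.2 hτI.1)
    intro u hu
    have hd := hden u (hsub hu) (hφle u hu)
    rw [norm_div]
    have : ‖(2 : ℂ)‖ = 2 := by norm_num
    rw [this]
    exact div_le_div_of_nonneg_left (by norm_num) hrpos hd
  have h6 : ‖τ - (0:ℝ)‖ = τ := by rw [sub_zero, Real.norm_eq_abs, abs_of_pos hτpos]
  have h7 : (1:ℝ) / 2 ≤ 2 / r * τ := by
    rw [hg0, h6] at hmvt
    linarith [hτE.2]
  have h8 : 2 / r * τ * r = 2 * τ := by field_simp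
  nlinarith [mul_le_mul_of_nonneg_right h7 hrpos.le, hτI.2]


lemma loewner_integral_bound (U : ℝ → ℝ) (hU : Continuous U) (t : ℝ) (ht : 0 ≤ t) (M : ℝ)
    (hM : ∀ s ∈ Icc 0 t, |U s| ≤ M)
    (z : ℂ) (g : ℝ → ℂ) (hg : IsLoewnerSolution U (Icc 0 t) z g)
    (hz : M + 4 * t + 2 ≤ ‖z‖) :
    ‖z * (g t - z) - ((2 * t : ℝ) : ℂ)‖ ≤ 2 * (1 + M) / (‖z‖ - M - 1) * t := by
  have hclose := loewner_stays_close U t ht M hM z g hg hz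
  obtain ⟨hg0, hgne, hgd⟩ := hg
  have hM0 : (0:ℝ) ≤ M := (abs_nonneg _).trans (hM 0 (left_mem_Icc.2 ht))
  set r : ℝ := ‖z‖ - M - 1 with hr
  have hrpos : 0 < r := by simp only [hr]; linarith
  have hcont : ContinuousOn g (Icc 0 t) := fun s hs => (hgd s hs).continuousWithinAt
  have hden : ∀ u ∈ Icc 0 t, r ≤ ‖g u - (U u : ℂ)‖ := by
    intro u hu
    have hφ := hclose u hu
    have h1 : ‖z - (U u : ℂ)‖ ≤ ‖g u - (U u : ℂ)‖ + ‖g u - z‖ := by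
      have h0 : z - (U u : ℂ) = (g u - (U u : ℂ)) - (g u - z) := by ring
      rw [h0]; exact norm_sub_le _ _
    have h2 : ‖z‖ - M ≤ ‖z - (U u : ℂ)‖ := by
      have h3 : ‖z‖ - ‖(U u : ℂ)‖ ≤ ‖z - (U u : ℂ)‖ := norm_sub_norm_le _ _
      have h4 : ‖(U u : ℂ)‖ ≤ M := by
        rw [Complex.norm_real, Real.norm_eq_abs]; exact hM u hu
      have h5 : ‖z‖ = ‖z‖ := rfl
      linarith
    simp only [hr]; linarith
  have hne : ∀ u ∈ Icc 0 t, g u - (U u : ℂ) ≠ 0 := by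
    intro u hu h
    have := hden u hu
    rw [h, norm_zero] at this
    linarith
  have hfc : ContinuousOn (fun s => 2 / (g s - (U s : ℂ))) (Icc 0 t) :=
    continuousOn_const.div (hcont.sub (Complex.continuous_ofReal.comp hU).continuousOn) hne
  have hfc' : ContinuousOn (fun s => 2 / (g s - (U s : ℂ))) (uIcc 0 t) := by
    rwa [uIcc_of_le ht]
  have hInt : IntervalIntegrable (fun s => 2 / (g s - (U s : ℂ)))
      MeasureTheory.volume 0 t := hfc'.intervalIntegrable
  have hderiv' : ∀ s ∈ Ioo 0 t, HasDerivWithinAt g (2 / (g s - (U s : ℂ))) (Ioi s) s := by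
    intro s hs
    have hmem : Icc (0:ℝ) t ∈ nhds s := Icc_mem_nhds hs.1 hs.2
    exact ((hgd s (Ioo_subset_Icc_self hs)).hasDerivAt hmem).hasDerivWithinAt
  have hFTC : ∫ s in (0:ℝ)..t, 2 / (g s - (U s : ℂ)) = g t - g 0 :=
    intervalIntegral.integral_eq_sub_of_hasDeriv_right_of_le ht hcont hderiv' hInt
  have heq : z * (g t - z) - ((2 * t : ℝ) : ℂ)
      = ∫ s in (0:ℝ)..t, (z * (2 / (g s - (U s : ℂ))) - 2) := by
    rw [intervalIntegral.integral_sub (hInt.const_mul z) intervalIntegrable_const,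
        intervalIntegral.integral_const_mul, hFTC, hg0, intervalIntegral.integral_const]
    push_cast
    rw [sub_zero, Complex.real_smul]
    push_cast
    ring
  have hbound : ∀ s ∈ Set.uIoc (0:ℝ) t, ‖z * (2 / (g s - (U s : ℂ))) - 2‖ ≤ 2 * (1 + M) / r := by
    intro s hs
    have hs' : s ∈ Icc 0 t := by
      rw [Set.uIoc_of_le ht] at hs; exact Ioc_subset_Icc_self hs
    have hd := hden s hs'
    have hne' := hne s hs'
    have hrw : z * (2 / (g s - (U s : ℂ))) - 2
        = 2 * ((z - g s) + (U s : ℂ)) / (g s - (U s : ℂ)) := by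
      field_simp
      ring
    rw [hrw, norm_div, norm_mul]
    have hnum : ‖(z - g s) + (U s : ℂ)‖ ≤ 1 + M := by
      refine (norm_add_le _ _).trans ?_
      have h1 : ‖z - g s‖ ≤ 1 / 2 := by rw [norm_sub_rev]; exact hclose s hs'
      have h2 : ‖(U s : ℂ)‖ ≤ M := by
        rw [Complex.norm_real, Real.norm_eq_abs]; exact hM s hs'
      linarith
    have h2n : ‖(2:ℂ)‖ = 2 := by norm_num
    rw [h2n]
    exact div_le_div₀ (by positivity) (by nlinarith) hrpos hd
  rw [heq]
  have hfin := intervalIntegral.norm_integral_le_of_norm_le_const hbound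
  rw [sub_zero, abs_of_nonneg ht] at hfin
  exact hfin

/-- The normalized Löwner maps satisfy `g(t,z) = z + 2t/z + O(z⁻²)` as `z → ∞`:
`z·(g(t,z) − z) → 2t` as `z → ∞` within the upper half-plane (outside radius `R`),
so the hull at time `t` has capacity `2t`. -/
theorem loewner_capacity_two_t
    (U : ℝ → ℝ) (hU : Continuous U) (t : ℝ) (ht : 0 ≤ t) (R : ℝ) (hR : 0 < R)
    (G : ℝ → ℂ → ℂ)
    (hG : ∀ z : ℂ, 0 < z.im → R < ‖z‖ →
      IsLoewnerSolution U (Icc 0 t) z (fun s => G s z)) :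
    Tendsto (fun z : ℂ => z * (G t z - z))
      (comap (fun z : ℂ => ‖z‖) atTop ⊓
        𝓟 {z : ℂ | 0 < z.im ∧ R < ‖z‖})
      (nhds ((2 * t : ℝ) : ℂ)) := by
  obtain ⟨M, hM⟩ := isCompact_Icc.exists_bound_of_continuousOn
    (hU.continuousOn : ContinuousOn U (Icc 0 t))
  simp only [Real.norm_eq_abs] at hM
  have hM0 : (0:ℝ) ≤ M := (abs_nonneg _).trans (hM 0 (left_mem_Icc.2 ht))
  rw [Metric.tendsto_nhds]
  intro ε hε
  rw [eventually_inf_principal]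
  have hev : ∀ᶠ z : ℂ in comap (fun z : ℂ => ‖z‖) atTop,
      max (M + 4 * t + 2) (M + 1 + 2 * (1 + M) * t / ε + 1) < ‖z‖ :=
    tendsto_comap.eventually (eventually_gt_atTop _)
  filter_upwards [hev] with z hz hzS
  obtain ⟨hzim, hzR⟩ := hzS
  have hbig : M + 4 * t + 2 ≤ ‖z‖ := ((le_max_left _ _).trans_lt hz).le
  have hb := loewner_integral_bound U hU t ht M hM z (fun s => G s z)
    (hG z hzim hzR) hbig
  rw [dist_eq_norm]
  refine lt_of_le_of_lt hb ?_
  have hrbig : M + 1 + 2 * (1 + M) * t / ε + 1 < ‖z‖ :=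
    (le_max_right _ _).trans_lt hz
  have hrpos : (0:ℝ) < ‖z‖ - M - 1 := by
    have : 0 ≤ 2 * (1 + M) * t / ε := by positivity
    linarith
  rw [div_mul_eq_mul_div, div_lt_iff₀ hrpos]
  have h1 : ε * (2 * (1 + M) * t / ε) = 2 * (1 + M) * t := by
    field_simp
  nlinarith [mul_lt_mul_of_pos_left hrbig hε]
end

section
/- Let U : [0,∞) → ℝ be continuous, let t₀ ≥ 0, and let w ∈ ℂ with Im w > 0. Then there exists z ∈ ℂ with Im z > 0 and a solution g : [0,t₀] → ℂ of the chordal Löwner equation driven by U with initial value z such that Im g(t) > 0 for all t ∈ [0,t₀] and g(t₀) = w. (Surjectivity of the Löwner maps onto the upper half-plane, proved via the inverse flow h'(t) = −2/(h(t) − U(t₀ − t)), h(0) = w, whose imaginary part is increasing.) -/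
open Set Filter

noncomputable section

/-- Truncation map pushing the imaginary part up to at least `c`. -/
def lphi (c : ℝ) (z : ℂ) : ℂ := (z.re : ℂ) + (max z.im c : ℝ) * Complex.I

lemma lphi_re (c : ℝ) (z : ℂ) : (lphi c z).re = z.re := by simp [lphi]

lemma lphi_im (c : ℝ) (z : ℂ) : (lphi c z).im = max z.im c := by simp [lphi]

lemma lphi_eq_self {c : ℝ} {z : ℂ} (h : c ≤ z.im) : lphi c z = z := by
  apply Complex.ext
  · simp [lphi]
  · simp [lphi, max_eq_left h]

lemma lphi_lipschitz (c : ℝ) : LipschitzWith 1 (lphi c) := by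
  apply LipschitzWith.of_dist_le_mul
  intro a b
  rw [Complex.dist_eq_re_im, Complex.dist_eq_re_im, NNReal.coe_one, one_mul]
  apply Real.sqrt_le_sqrt
  have h1 : (lphi c a).re - (lphi c b).re = a.re - b.re := by rw [lphi_re, lphi_re]
  have h2 : |(lphi c a).im - (lphi c b).im| ≤ |a.im - b.im| := by
    rw [lphi_im, lphi_im]; exact abs_max_sub_max_le_abs _ _ _
  have h3 : ((lphi c a).im - (lphi c b).im) ^ 2 ≤ (a.im - b.im) ^ 2 := by
    rw [← sq_abs, ← sq_abs (a.im - b.im)]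
    exact pow_le_pow_left₀ (abs_nonneg _) h2 2
  rw [h1]
  linarith

end

/-- Surjectivity of the Löwner maps onto the upper half-plane: for every `w ∈ ℍ` and
every time `t₀ ≥ 0` there is an initial point `z ∈ ℍ` whose Löwner flow stays in `ℍ`
and reaches `w` at time `t₀`. -/
theorem loewner_maps_surjective
    (U : ℝ → ℝ) (hU : Continuous U) (t₀ : ℝ) (ht₀ : 0 ≤ t₀)
    (w : ℂ) (hw : 0 < w.im) :
    ∃ z : ℂ, 0 < z.im ∧ ∃ g : ℝ → ℂ,
      IsLoewnerSolution U (Icc 0 t₀) z g ∧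
      (∀ t ∈ Icc (0:ℝ) t₀, 0 < (g t).im) ∧
      g t₀ = w := by
  set c : ℝ := w.im with hc
  set v : ℝ → ℂ → ℂ := fun t z => -2 / (lphi c z - (U (t₀ - t) : ℂ)) with hv
  -- imaginary part of the (truncated) denominator is at least c
  have hAim : ∀ (t : ℝ) (z : ℂ), c ≤ (lphi c z - (U (t₀ - t) : ℂ)).im := by
    intro t z
    simp [Complex.sub_im, lphi_im, le_max_right]
  have hAnorm : ∀ (t : ℝ) (z : ℂ), c ≤ ‖lphi c z - (U (t₀ - t) : ℂ)‖ := by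
    intro t z
    calc c ≤ (lphi c z - (U (t₀ - t) : ℂ)).im := hAim t z
    _ ≤ |(lphi c z - (U (t₀ - t) : ℂ)).im| := le_abs_self _
    _ ≤ ‖lphi c z - (U (t₀ - t) : ℂ)‖ := Complex.abs_im_le_norm _
  have hAne : ∀ (t : ℝ) (z : ℂ), lphi c z - (U (t₀ - t) : ℂ) ≠ 0 := by
    intro t z h0
    have := hAnorm t z
    rw [h0, norm_zero] at this
    exact absurd (lt_of_lt_of_le hw this) (lt_irrefl 0)
  -- norm bound
  have hnorm : ∀ (t : ℝ) (z : ℂ), ‖v t z‖ ≤ 2 / c := by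
    intro t z
    rw [hv]
    simp only [norm_div, norm_neg]
    have : ‖(2 : ℂ)‖ = 2 := by norm_num
    rw [this]
    apply div_le_div_of_nonneg_left (by norm_num) hw (hAnorm t z)
  -- Lipschitz in the space variable
  have hlip : ∀ t : ℝ, LipschitzWith (Real.toNNReal (2 / (c * c))) (v t) := by
    intro t
    apply LipschitzWith.of_dist_le_mul
    intro a b
    set A := lphi c a - (U (t₀ - t) : ℂ) with hA
    set B := lphi c b - (U (t₀ - t) : ℂ) with hB
    have hAne' : A ≠ 0 := hAne t a
    have hBne' : B ≠ 0 := hAne t b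
    have key : v t a - v t b = -2 * ((B - A) / (A * B)) := by
      rw [hv]
      simp only
      rw [div_eq_mul_inv, div_eq_mul_inv, ← mul_sub, inv_sub_inv hAne' hBne']
    have hBA : ‖B - A‖ ≤ dist a b := by
      have hrw : B - A = lphi c b - lphi c a := by rw [hA, hB]; ring
      rw [hrw, ← dist_eq_norm, dist_comm a b]
      have := (lphi_lipschitz c).dist_le_mul b a
      simpa using this
    rw [dist_eq_norm, key]
    rw [norm_mul, norm_div, norm_mul]
    have h2 : ‖(-2 : ℂ)‖ = 2 := by norm_num
    rw [h2]
    have hcpos : (0:ℝ) < c := hw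
    have hcoe : ((Real.toNNReal (2 / (c * c))) : ℝ) = 2 / (c * c) := by
      rw [Real.coe_toNNReal]
      positivity
    rw [hcoe]
    have hfrac : ‖B - A‖ / (‖A‖ * ‖B‖) ≤ dist a b / (c * c) :=
      div_le_div₀ dist_nonneg hBA (mul_pos hcpos hcpos)
        (mul_le_mul (hAnorm t a) (hAnorm t b) (le_of_lt hcpos) (norm_nonneg _))
    calc 2 * (‖B - A‖ / (‖A‖ * ‖B‖)) ≤ 2 * (dist a b / (c * c)) := by linarith
    _ = 2 / (c * c) * dist a b := by ring
  -- Picard–Lindelöf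
  have hPL : IsPicardLindelof v (tmin := 0) (tmax := t₀) ⟨0, left_mem_Icc.2 ht₀⟩ w
      (Real.toNNReal (2 / c * t₀)) 0 (Real.toNNReal (2 / c)) (Real.toNNReal (2 / (c * c))) := by
    constructor
    · intro t _; exact (hlip t).lipschitzOnWith
    · intro x _
      apply Continuous.continuousOn
      apply Continuous.div continuous_const
      · exact continuous_const.sub (Complex.continuous_ofReal.comp (hU.comp (continuous_const.sub continuous_id)))
      · intro t; exact hAne t x
    · intro t _ z _; rw [Real.coe_toNNReal _ (div_pos two_pos hw).le]; exact hnorm t z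
    · simp only [Real.coe_toNNReal _ (div_pos two_pos hw).le,
        Real.coe_toNNReal _ (mul_nonneg (div_pos two_pos hw).le ht₀), NNReal.coe_zero, sub_zero,
        sub_self]
      rw [max_eq_left ht₀]
  obtain ⟨h, h0', hderiv⟩ := hPL.exists_eq_forall_mem_Icc_hasDerivWithinAt₀
  have h0 : h 0 = w := h0'
  -- positivity of imaginary part of v
  have hvim : ∀ (t : ℝ) (z : ℂ), 0 < (v t z).im := by
    intro t z
    rw [hv]
    simp only
    rw [Complex.div_im]
    have hns : 0 < Complex.normSq (lphi c z - (U (t₀ - t) : ℂ)) :=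
      Complex.normSq_pos.2 (hAne t z)
    have him := lt_of_lt_of_le hw (hAim t z)
    have e1 : (-2 : ℂ).im = 0 := by norm_num
    have e2 : (-2 : ℂ).re = -2 := by norm_num
    rw [e1, e2]
    have key : (0:ℝ) * (lphi c z - (U (t₀ - t) : ℂ)).re / Complex.normSq (lphi c z - (U (t₀ - t) : ℂ)) -
        (-2) * (lphi c z - (U (t₀ - t) : ℂ)).im / Complex.normSq (lphi c z - (U (t₀ - t) : ℂ))
        = 2 * (lphi c z - (U (t₀ - t) : ℂ)).im / Complex.normSq (lphi c z - (U (t₀ - t) : ℂ)) := by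
      ring
    rw [key]
    exact div_pos (by linarith) hns
  -- the imaginary part of h is monotone
  have hcont : ContinuousOn h (Icc 0 t₀) := fun t ht => (hderiv t ht).continuousWithinAt
  have hmono : StrictMonoOn (fun t => (h t).im) (Icc 0 t₀) := by
    apply strictMonoOn_of_deriv_pos (convex_Icc 0 t₀)
    · exact Complex.continuous_im.comp_continuousOn hcont
    · intro x hx
      rw [interior_Icc] at hx
      have hx' : x ∈ Icc 0 t₀ := Ioo_subset_Icc_self hx
      have hd : HasDerivAt h (v x (h x)) x :=
        (hderiv x hx').hasDerivAt (Icc_mem_nhds hx.1 hx.2)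
      have hd2 : HasDerivAt (fun t => (h t).im) ((v x (h x)).im) x := by
        have := Complex.imCLM.hasFDerivAt.comp_hasDerivAt x hd
        exact this
      rw [hd2.deriv]
      exact hvim x (h x)
  have him : ∀ t ∈ Icc (0:ℝ) t₀, c ≤ (h t).im := by
    intro t ht
    rcases eq_or_lt_of_le ht.1 with h0t | h0t
    · rw [← h0t, h0, ← hc]
    · have := hmono (left_mem_Icc.2 ht₀) ht h0t
      simp only [h0] at this
      rw [hc]
      exact le_of_lt this
  have hphi : ∀ t ∈ Icc (0:ℝ) t₀, lphi c (h t) = h t :=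
    fun t ht => lphi_eq_self (him t ht)
  -- define g as the time-reversal of h
  refine ⟨h t₀, lt_of_lt_of_le hw (him t₀ (right_mem_Icc.2 ht₀)), fun t => h (t₀ - t), ?_, ?_, ?_⟩
  · refine ⟨by show h (t₀ - 0) = h t₀; rw [sub_zero], ?_, ?_⟩
    · intro t ht hEq
      have hmem : t₀ - t ∈ Icc (0:ℝ) t₀ := ⟨sub_nonneg.2 ht.2, sub_le_self _ ht.1⟩
      have := lt_of_lt_of_le hw (him _ hmem)
      rw [show h (t₀ - t) = (U t : ℂ) from hEq] at this
      simp at this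
    · intro t ht
      have hmem : t₀ - t ∈ Icc (0:ℝ) t₀ := ⟨sub_nonneg.2 ht.2, sub_le_self _ ht.1⟩
      have H := hderiv (t₀ - t) hmem
      have hval : v (t₀ - t) (h (t₀ - t)) = -2 / (h (t₀ - t) - (U t : ℂ)) := by
        rw [hv]
        simp only
        rw [hphi _ hmem, sub_sub_cancel]
      rw [hval] at H
      have Hσ : HasDerivWithinAt (fun s : ℝ => t₀ - s) (-1) (Icc 0 t₀) t :=
        ((hasDerivAt_id t).const_sub t₀).hasDerivWithinAt
      have hmaps : MapsTo (fun s : ℝ => t₀ - s) (Icc 0 t₀) (Icc 0 t₀) :=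
        fun s hs => ⟨sub_nonneg.2 hs.2, sub_le_self _ hs.1⟩
      have hcomp := H.scomp t Hσ hmaps
      have heq : ((-1 : ℝ)) • (-2 / (h (t₀ - t) - (U t : ℂ))) = 2 / (h (t₀ - t) - (U t : ℂ)) := by
        rw [Complex.real_smul]
        push_cast
        ring
      rw [heq] at hcomp
      exact hcomp
  · intro t ht
    have hmem : t₀ - t ∈ Icc (0:ℝ) t₀ := ⟨sub_nonneg.2 ht.2, sub_le_self _ ht.1⟩
    exact lt_of_lt_of_le hw (him _ hmem)
  · show h (t₀ - t₀) = w
    rw [sub_self, h0]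
end

section
/- Let K be a nonempty hull (so K ∩ ℍ ≠ ∅), let g be a hydrodynamically normalized conformal bijection of ℍ∖K onto ℍ, and suppose the capacity a = lim_{z→∞} z·(g(z) − z) exists. Then a > 0: the capacity of every nonempty hull is strictly positive. -/
open Set Filter Complex Topology




lemma normSq_conj_diff {p q : ℂ} :
    normSq (q - (starRingEnd ℂ) p) - normSq (q - p) = 4 * p.im * q.im := by
  simp [Complex.normSq_apply, Complex.sub_re, Complex.sub_im, Complex.conj_re, Complex.conj_im]
  ring

lemma abs_sub_lt_abs_sub_conj {p q : ℂ} (hp : 0 < p.im) (hq : 0 < q.im) :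
    ‖q - p‖ < ‖q - (starRingEnd ℂ) p‖ := by
  have h := normSq_conj_diff (p := p) (q := q)
  have h1 : normSq (q - p) < normSq (q - (starRingEnd ℂ) p) := by nlinarith
  rw [Complex.norm_def, Complex.norm_def]
  exact Real.sqrt_lt_sqrt (normSq_nonneg _) h1

lemma cayley_inv_im {z ξ : ℂ} (hξ : ξ ≠ 1) :
    ((z - (starRingEnd ℂ) z * ξ) / (1 - ξ)).im
      = z.im * (1 - normSq ξ) / normSq (1 - ξ) := by
  have h0 : normSq (1 - ξ) ≠ 0 := by
    simpa [Complex.normSq_eq_zero, sub_eq_zero] using fun h => hξ h.symm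
  rw [Complex.div_im]
  field_simp [Complex.normSq_apply, Complex.mul_re, Complex.mul_im, Complex.conj_re,
    Complex.conj_im, Complex.sub_re, Complex.sub_im, Complex.one_re, Complex.one_im]
  simp [Complex.normSq_apply, Complex.mul_re, Complex.mul_im, Complex.sub_re, Complex.sub_im]
  ring

lemma sub_conj_ne {p q : ℂ} (hp : 0 < p.im) (hq : 0 < q.im) :
    q - (starRingEnd ℂ) p ≠ 0 := by
  intro h
  have h2 : (q - (starRingEnd ℂ) p).im = 0 := by rw [h]; simp
  simp [Complex.sub_im, Complex.conj_im] at h2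
  linarith

/-- Schwarz–Pick inequality on the upper half plane (pseudo-hyperbolic contraction). -/
lemma schwarz_pick_half_plane {F : ℂ → ℂ}
    (hd : DifferentiableOn ℂ F {z : ℂ | 0 < z.im})
    (hm : MapsTo F {z : ℂ | 0 < z.im} {z : ℂ | 0 < z.im})
    {z w : ℂ} (hz : 0 < z.im) (hw : 0 < w.im) :
    ‖F w - F z‖ * ‖w - (starRingEnd ℂ) z‖
      ≤ ‖w - z‖ * ‖F w - (starRingEnd ℂ) (F z)‖ := by
  have hFz : 0 < (F z).im := hm hz
  have hFw : 0 < (F w).im := hm hw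
  set u : ℂ → ℂ := fun ξ => (z - (starRingEnd ℂ) z * ξ) / (1 - ξ) with hu
  have hball : ∀ ξ : ℂ, ξ ∈ Metric.ball (0:ℂ) 1 → 0 < (u ξ).im := by
    intro ξ hξ
    rw [Metric.mem_ball, dist_zero_right] at hξ
    have hξ1 : ξ ≠ 1 := by
      intro h; rw [h] at hξ; norm_num at hξ
    have hns : normSq ξ < 1 := by
      rw [← Complex.sq_norm]
      nlinarith [norm_nonneg ξ, hξ]
    have hpos : 0 < normSq (1 - ξ) := by
      rw [Complex.normSq_pos]
      simpa [sub_eq_zero] using fun h => hξ1 h.symm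
    rw [hu]
    simp only
    rw [cayley_inv_im hξ1]
    exact div_pos (mul_pos hz (by linarith)) hpos
  set Φ : ℂ → ℂ := fun ξ =>
    (F (u ξ) - F z) / (F (u ξ) - (starRingEnd ℂ) (F z)) with hΦ
  -- Φ is differentiable on ball 0 1
  have hud : DifferentiableOn ℂ u (Metric.ball (0:ℂ) 1) := by
    apply DifferentiableOn.div
    · exact (differentiableOn_const _).sub
        ((differentiableOn_const _).mul differentiableOn_id)
    · exact (differentiableOn_const _).sub differentiableOn_id
    · intro ξ hξ
      rw [Metric.mem_ball, dist_zero_right] at hξ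
      intro h
      rw [sub_eq_zero] at h
      rw [← h] at hξ; norm_num at hξ
  have hFu : DifferentiableOn ℂ (fun ξ => F (u ξ)) (Metric.ball (0:ℂ) 1) :=
    hd.comp hud (fun ξ hξ => hball ξ hξ)
  have hΦd : DifferentiableOn ℂ Φ (Metric.ball (0:ℂ) 1) := by
    apply DifferentiableOn.div
    · exact hFu.sub (differentiableOn_const _)
    · exact hFu.sub (differentiableOn_const _)
    · intro ξ hξ
      exact sub_conj_ne hFz (hm (hball ξ hξ))
  have hΦ0 : Φ 0 = 0 := by
    have hu0 : u 0 = z := by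
      rw [hu]; simp
    rw [hΦ]; simp only [hu0]; simp
  have hΦm : MapsTo Φ (Metric.ball (0:ℂ) 1) (Metric.ball (0:ℂ) 1) := by
    intro ξ hξ
    rw [Metric.mem_ball, dist_zero_right]
    have h1 := hball ξ hξ
    have h2 : 0 < (F (u ξ)).im := hm h1
    have hlt := abs_sub_lt_abs_sub_conj hFz h2
    have hne : 0 < ‖F (u ξ) - (starRingEnd ℂ) (F z)‖ :=
      norm_pos_iff.mpr (sub_conj_ne hFz h2)
    rw [hΦ]
    simp only [norm_div]
    rw [div_lt_one hne]
    exact hlt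
  -- apply Schwarz lemma at ξ₀
  have hwz : w - (starRingEnd ℂ) z ≠ 0 := sub_conj_ne hz hw
  set ξ₀ : ℂ := (w - z) / (w - (starRingEnd ℂ) z) with hξ₀
  have hξ₀lt : ‖ξ₀‖ < 1 := by
    rw [hξ₀, norm_div, div_lt_one (by exact norm_pos_iff.mpr hwz)]
    exact abs_sub_lt_abs_sub_conj hz hw
  have hsch := Complex.norm_le_norm_of_mapsTo_ball hΦd (hΦm.mono_right Metric.ball_subset_closedBall) hΦ0 hξ₀lt
  have huξ₀ : u ξ₀ = w := by
    have h1 : (1:ℂ) - ξ₀ ≠ 0 := by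
      intro h; rw [sub_eq_zero] at h
      rw [← h] at hξ₀lt; norm_num at hξ₀lt
    have hzz : z - (starRingEnd ℂ) z ≠ 0 := by
      intro h
      have h2 : (z - (starRingEnd ℂ) z).im = 0 := by rw [h]; simp
      simp [Complex.sub_im, Complex.conj_im] at h2
      linarith
    rw [hu, hξ₀]
    field_simp
    linear_combination w * mul_inv_cancel₀ hzz
  rw [hΦ] at hsch
  simp only [huξ₀] at hsch
  rw [hξ₀] at hsch
  rw [norm_div, norm_div] at hsch
  have d1 : 0 < ‖F w - (starRingEnd ℂ) (F z)‖ := by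
    exact norm_pos_iff.mpr (sub_conj_ne hFz hFw)
  have d2 : 0 < ‖w - (starRingEnd ℂ) z‖ := by
    exact norm_pos_iff.mpr hwz
  rw [div_le_div_iff₀ d1 d2] at hsch
  linarith


/-- An analytic map has strict derivative `deriv f z` at `z`. -/
lemma AnalyticAt.hasStrictDerivAt' {f : ℂ → ℂ} {z : ℂ} (h : AnalyticAt ℂ f z) :
    HasStrictDerivAt f (deriv f z) z := by
  obtain ⟨p, hp⟩ := h
  have := hp.hasStrictDerivAt
  rwa [hp.deriv]

/-- An injective holomorphic function on an open set has nonvanishing derivative. -/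
lemma deriv_ne_zero_of_injOn {U : Set ℂ} (hU : IsOpen U) {g : ℂ → ℂ}
    (hd : DifferentiableOn ℂ g U) (hinj : InjOn g U) {z₀ : ℂ} (hz₀ : z₀ ∈ U) :
    deriv g z₀ ≠ 0 := by
  intro hder
  have hA : AnalyticAt ℂ g z₀ := hd.analyticAt (hU.mem_nhds hz₀)
  set f : ℂ → ℂ := fun z => g z - g z₀ with hf
  have hfA : AnalyticAt ℂ f z₀ := hA.sub analyticAt_const
  -- two nearby distinct points with equal g-values give a contradiction
  have key : ∀ z₁ z₂ : ℂ, z₁ ∈ U → z₂ ∈ U → z₁ ≠ z₂ → g z₁ ≠ g z₂ := by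
    intro z₁ z₂ h1 h2 hne heq
    exact hne (hinj h1 h2 heq)
  -- order of f at z₀ is finite
  have horder : analyticOrderAt f z₀ ≠ ⊤ := by
    intro htop
    rw [analyticOrderAt_eq_top] at htop
    obtain ⟨r, hr, hball⟩ := Metric.eventually_nhds_iff_ball.mp (htop.and
      (eventually_mem_nhds_iff.mpr (hU.mem_nhds hz₀)))
    set z₁ : ℂ := z₀ + r/2 with hz₁
    have hdist : dist z₁ z₀ = r/2 := by
      rw [hz₁, dist_eq]
      rw [show z₀ + (r:ℂ)/2 - z₀ = ((r/2:ℝ):ℂ) by push_cast; ring, Complex.norm_real,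
        Real.norm_eq_abs, abs_of_pos (by positivity)]
    have hz₁mem : z₁ ∈ Metric.ball z₀ r := by
      rw [Metric.mem_ball, hdist]; linarith
    obtain ⟨hf1, hU1'⟩ := hball z₁ hz₁mem
    have hU1 : z₁ ∈ U := mem_of_mem_nhds hU1'
    have : g z₁ = g z₀ := by
      have : f z₁ = 0 := hf1
      simpa [hf] using sub_eq_zero.mp this
    exact key z₁ z₀ hU1 hz₀ (by simp [hz₁]; positivity) this
  obtain ⟨n, hn⟩ : ∃ n : ℕ, analyticOrderAt f z₀ = n := by
    cases h : analyticOrderAt f z₀ with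
    | top => exact absurd h horder
    | coe n => exact ⟨n, rfl⟩
  rw [hfA.analyticOrderAt_eq_natCast] at hn
  obtain ⟨u, huA, hu0, hueq⟩ := hn
  -- n ≠ 0
  have hn0 : n ≠ 0 := by
    intro h0
    have hfz₀ : f z₀ = 0 := by simp [hf]
    have := hueq.self_of_nhds
    rw [h0] at this
    simp [hfz₀] at this
    exact hu0 this.symm
  -- n ≠ 1
  have hn1 : n ≠ 1 := by
    intro h1
    have hd1 : HasDerivAt f (u z₀) z₀ := by
      have huder : HasDerivAt (fun z => (z - z₀) ^ n • u z)
          ((1:ℂ) * u z₀ + (z₀ - z₀) * deriv u z₀) z₀ := by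
        rw [h1]
        simpa [pow_one, Pi.mul_def] using
          (((hasDerivAt_id z₀).sub_const z₀).mul huA.differentiableAt.hasDerivAt)
      have := huder.congr_of_eventuallyEq hueq
      simpa using this
    have h2 : deriv f z₀ = u z₀ := hd1.deriv
    have h3 : deriv f z₀ = deriv g z₀ := by
      simp only [hf]
      exact deriv_sub_const _
    exact hu0 (by rw [← h2, h3, hder])
  have hn2 : 2 ≤ n := by omega
  have hnC : (n:ℂ) ≠ 0 := by exact_mod_cast (by omega : n ≠ 0)
  -- n-th root of u near z₀
  set c : ℂ := Complex.log (u z₀) with hc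
  set v : ℂ → ℂ := fun z => Complex.exp ((Complex.log (u z * (u z₀)⁻¹) + c) / n) with hv
  have hvA : AnalyticAt ℂ v z₀ := by
    apply AnalyticAt.cexp
    apply AnalyticAt.div _ analyticAt_const hnC
    apply AnalyticAt.add _ analyticAt_const
    apply AnalyticAt.clog (huA.mul analyticAt_const)
    simp [hu0]
  have hvn : ∀ᶠ z in 𝓝 z₀, v z ^ n = u z := by
    have hmem : ∀ᶠ z in 𝓝 z₀, u z * (u z₀)⁻¹ ∈ Complex.slitPlane := by
      apply (huA.continuousAt.mul continuousAt_const).eventually_mem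
        (Complex.isOpen_slitPlane.mem_nhds _)
      simp [hu0]
    filter_upwards [hmem] with z hz
    have hz0 : u z * (u z₀)⁻¹ ≠ 0 := Complex.slitPlane_ne_zero hz
    rw [hv]
    simp only
    rw [← Complex.exp_nat_mul, mul_div_cancel₀ _ hnC, Complex.exp_add,
      Complex.exp_log hz0, hc, Complex.exp_log hu0]
    field_simp
  set φ : ℂ → ℂ := fun z => (z - z₀) * v z with hφ
  have hφA : AnalyticAt ℂ φ z₀ := (analyticAt_id.sub analyticAt_const).mul hvA
  have hφ0 : φ z₀ = 0 := by simp [hφ]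
  have hv0 : v z₀ ≠ 0 := Complex.exp_ne_zero _
  have hφd : HasDerivAt φ (v z₀) z₀ := by
    simpa [Pi.mul_def] using ((hasDerivAt_id z₀).sub_const z₀).mul hvA.differentiableAt.hasDerivAt
  have hφs : HasStrictDerivAt φ (v z₀) z₀ := by
    have h := hφA.hasStrictDerivAt'
    rwa [hφd.deriv] at h
  have hmap : map φ (𝓝 z₀) = 𝓝 0 := by
    have h := hφs.map_nhds_eq hv0
    rwa [hφ0] at h
  -- eventual identity
  have hgeq : ∀ᶠ z in 𝓝 z₀, g z = g z₀ + φ z ^ n ∧ z ∈ U := by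
    filter_upwards [hueq, hvn, hU.mem_nhds hz₀] with z h1 h2 h3
    refine ⟨?_, h3⟩
    have h1' : g z - g z₀ = (z - z₀) ^ n * u z := by simpa [hf, smul_eq_mul] using h1
    have : φ z ^ n = (z - z₀) ^ n * v z ^ n := mul_pow _ _ _
    rw [this, h2, ← h1']
    ring
  -- extract two distinct points with equal values
  have himg : φ '' {z | g z = g z₀ + φ z ^ n ∧ z ∈ U} ∈ 𝓝 (0:ℂ) := by
    rw [← hmap]
    exact image_mem_map hgeq
  obtain ⟨ε, hε, hball⟩ := Metric.mem_nhds_iff.mp himg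
  set ζ : ℂ := Complex.exp (2 * Real.pi * Complex.I / n) with hζ
  have hζn : ζ ^ n = 1 := by
    rw [hζ, ← Complex.exp_nat_mul, mul_div_cancel₀ _ hnC, Complex.exp_two_pi_mul_I]
  have hζ1 : ζ ≠ 1 := by
    intro h
    rw [hζ, Complex.exp_eq_one_iff] at h
    obtain ⟨k, hk⟩ := h
    have h2pi : (2 * Real.pi * Complex.I : ℂ) ≠ 0 := by
      simp [Complex.I_ne_zero, Real.pi_ne_zero]
    have hk2 : (k : ℂ) * n * (2 * Real.pi * Complex.I) = 1 * (2 * Real.pi * Complex.I) := by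
      have hdc : (2 * Real.pi * Complex.I / n : ℂ) * n = 2 * Real.pi * Complex.I :=
        div_mul_cancel₀ _ hnC
      rw [hk] at hdc
      rw [one_mul]
      linear_combination hdc
    have hk' : (k : ℂ) * n = 1 := mul_right_cancel₀ h2pi hk2
    have : (k * n : ℤ) = 1 := by exact_mod_cast hk'
    have hn' : (2:ℤ) ≤ n := by exact_mod_cast hn2
    rcases le_or_gt k 0 with hk0 | hk0
    · nlinarith
    · nlinarith
  have hζabs : ‖ζ‖ = 1 := by
    rw [hζ, Complex.norm_exp]
    have : (2 * Real.pi * Complex.I / n : ℂ).re = 0 := by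
      rw [show (2 * Real.pi * Complex.I / n : ℂ) = ((2 * Real.pi / n : ℝ) : ℂ) * Complex.I by
        push_cast; ring]
      simp
    rw [this, Real.exp_zero]
  set s : ℂ := ((ε/2 : ℝ) : ℂ) with hs
  have hs0 : s ≠ 0 := by
    simp [hs]
    positivity
  have hsmem : s ∈ Metric.ball (0:ℂ) ε := by
    rw [Metric.mem_ball, dist_zero_right, hs, Complex.norm_real,
      Real.norm_eq_abs, abs_of_pos (by positivity)]
    linarith
  have hsζmem : s * ζ ∈ Metric.ball (0:ℂ) ε := by
    rw [Metric.mem_ball, dist_zero_right, norm_mul, hζabs, mul_one,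
      hs, Complex.norm_real, Real.norm_eq_abs, abs_of_pos (by positivity)]
    linarith
  obtain ⟨z₁, ⟨hgz₁, hz₁U⟩, hφz₁⟩ := hball hsmem
  obtain ⟨z₂, ⟨hgz₂, hz₂U⟩, hφz₂⟩ := hball hsζmem
  have hgeq12 : g z₁ = g z₂ := by
    rw [hgz₁, hgz₂, hφz₁, hφz₂, mul_pow, hζn, mul_one]
  have hne12 : z₁ ≠ z₂ := by
    intro h
    rw [h, hφz₂] at hφz₁
    have h1 : s * ζ = s * 1 := by rw [mul_one]; exact hφz₁
    exact hζ1 (mul_left_cancel₀ hs0 h1)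
  exact key z₁ z₂ hz₁U hz₂U hne12 hgeq12


/-- The inverse of a holomorphic bijection between open sets is differentiable. -/
lemma invFunOn_differentiableAt {U V : Set ℂ} (hU : IsOpen U) (hV : IsOpen V) {g : ℂ → ℂ}
    (hd : DifferentiableOn ℂ g U) (hbij : BijOn g U V) {w : ℂ} (hw : w ∈ V) :
    DifferentiableAt ℂ (Function.invFunOn g U) w := by
  set f : ℂ → ℂ := Function.invFunOn g U with hfdef
  have hinv : InvOn f g U V := hbij.invOn_invFunOn
  have hmaps : MapsTo f V U := hbij.surjOn.mapsTo_invFunOn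
  set z : ℂ := f w with hz
  have hzU : z ∈ U := hmaps hw
  have hgz : g z = w := hinv.2 hw
  have hder : deriv g z ≠ 0 := deriv_ne_zero_of_injOn hU hd hbij.injOn hzU
  have hA : AnalyticAt ℂ g z := hd.analyticAt (hU.mem_nhds hzU)
  have hstrict : HasStrictDerivAt g (deriv g z) z := by
    obtain ⟨p, hp⟩ := hA
    have := hp.hasStrictDerivAt
    rwa [hp.deriv]
  set hs := hstrict.hasStrictFDerivAt_equiv hder with hsdef
  set li : ℂ → ℂ := hs.localInverse g _ z with hli
  have hlid : HasStrictFDerivAt li _ (g z) := hs.to_localInverse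
  have hlidiff : DifferentiableAt ℂ li w := by
    rw [← hgz]
    exact hlid.differentiableAt
  have hlicont : ContinuousAt li w := by
    rw [← hgz]
    exact hs.localInverse_continuousAt
  have hev : f =ᶠ[𝓝 w] li := by
    have h1 : ∀ᶠ w' in 𝓝 w, g (li w') = w' := by rw [← hgz]; exact hs.eventually_right_inverse
    have h2 : ∀ᶠ w' in 𝓝 w, li w' ∈ U := by
      apply hlicont.eventually_mem (hU.mem_nhds _)
      have : li w = z := by rw [← hgz, hli]; exact hs.localInverse_apply_image
      rw [this]; exact hzU
    have h3 : ∀ᶠ w' in 𝓝 w, w' ∈ V := hV.eventually_mem hw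
    filter_upwards [h1, h2, h3] with w' e1 e2 e3
    have hfw' : f w' ∈ U := hmaps e3
    have hgfw' : g (f w') = w' := hinv.2 e3
    exact hbij.injOn hfw' e2 (by rw [hgfw', e1])
  exact hlidiff.congr_of_eventuallyEq hev


/-- helper: `normSq (t*I - q)` as a real polynomial. -/
lemma normSq_tI_sub (t : ℝ) (q : ℂ) :
    Complex.normSq ((t:ℂ) * Complex.I - q) = t^2 - 2*t*q.im + Complex.normSq q := by
  simp [Complex.normSq_apply, Complex.sub_re, Complex.sub_im, Complex.mul_re, Complex.mul_im,
    Complex.I_re, Complex.I_im, Complex.ofReal_re, Complex.ofReal_im]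
  ring

lemma nonneg_lim_of_cubic {A Lu Lv Lt : ℝ} {m u v t : ℕ → ℝ}
    (hm : Tendsto m atTop atTop)
    (hu : Tendsto u atTop (nhds Lu)) (hv : Tendsto v atTop (nhds Lv))
    (ht : Tendsto t atTop (nhds Lt))
    (hpos : ∀ᶠ n in atTop, 0 ≤ A * m n^3 + u n * m n^2 + v n * m n + t n) :
    0 ≤ A := by
  have hminv : Tendsto (fun n => (m n)⁻¹) atTop (nhds 0) := hm.inv_tendsto_atTop
  set E : ℕ → ℝ := fun n => A + u n * (m n)⁻¹ + v n * ((m n)⁻¹)^2 + t n * ((m n)⁻¹)^3 with hE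
  have hEt : Tendsto E atTop (nhds (A + Lu * 0 + Lv * 0^2 + Lt * 0^3)) := by
    apply Tendsto.add
    apply Tendsto.add
    apply Tendsto.add tendsto_const_nhds
    · exact hu.mul hminv
    · exact hv.mul (hminv.pow 2)
    · exact ht.mul (hminv.pow 3)
  have hlim : Tendsto E atTop (nhds A) := by simpa using hEt
  have hEpos : ∀ᶠ n in atTop, 0 ≤ E n := by
    filter_upwards [hpos, hm.eventually_gt_atTop 0] with n h1 h2
    have hne : m n ≠ 0 := ne_of_gt h2
    have hid : E n = (A * m n^3 + u n * m n^2 + v n * m n + t n) / m n ^ 3 := by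
      rw [hE]; field_simp
    rw [hid]
    positivity
  exact ge_of_tendsto hlim hEpos

lemma nonneg_lim_of_linear {Lq Lr : ℝ} {m q r : ℕ → ℝ}
    (hm : Tendsto m atTop atTop)
    (hq : Tendsto q atTop (nhds Lq)) (hr : Tendsto r atTop (nhds Lr))
    (hpos : ∀ᶠ n in atTop, 0 ≤ q n * m n + r n) :
    0 ≤ Lq := by
  have hminv : Tendsto (fun n => (m n)⁻¹) atTop (nhds 0) := hm.inv_tendsto_atTop
  set E : ℕ → ℝ := fun n => q n + r n * (m n)⁻¹ with hE
  have hlim : Tendsto E atTop (nhds Lq) := by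
    have := hq.add (hr.mul hminv)
    simpa using this
  have hEpos : ∀ᶠ n in atTop, 0 ≤ E n := by
    filter_upwards [hpos, hm.eventually_gt_atTop 0] with n h1 h2
    have hne : m n ≠ 0 := ne_of_gt h2
    have hid : E n = (q n * m n + r n) / m n := by
      rw [hE]; field_simp
    rw [hid]
    positivity
  exact ge_of_tendsto hlim hEpos

/-- A (compact) hull in the upper half-plane: a compact subset `K` of the closed upper
half-plane such that `ℍ∖K` is a simply connected domain and `K = closure(K ∩ ℍ)`. -/
def IsHull (K : Set ℂ) : Prop :=
  IsCompact K ∧ K ⊆ {z : ℂ | 0 ≤ z.im} ∧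
    IsConnected ({z : ℂ | 0 < z.im} \ K) ∧
    SimplyConnectedSpace ↥({z : ℂ | 0 < z.im} \ K) ∧
    K = closure (K ∩ {z : ℂ | 0 < z.im})

/-- Positivity of capacity: the capacity of a nonempty hull is strictly positive. -/
theorem capacity_pos_of_nonempty_hull
    (K : Set ℂ) (hK : IsHull K) (hKne : (K ∩ {z : ℂ | 0 < z.im}).Nonempty)
    (g : ℂ → ℂ) (a : ℝ)
    (hholo : DifferentiableOn ℂ g ({z : ℂ | 0 < z.im} \ K))
    (hbij : Set.BijOn g ({z : ℂ | 0 < z.im} \ K) {z : ℂ | 0 < z.im})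
    (hnorm : Tendsto (fun z : ℂ => g z - z)
      (comap (fun z : ℂ => ‖z‖) atTop ⊓ 𝓟 ({z : ℂ | 0 < z.im} \ K)) (nhds 0))
    (hcap : Tendsto (fun z : ℂ => z * (g z - z))
      (comap (fun z : ℂ => ‖z‖) atTop ⊓ 𝓟 ({z : ℂ | 0 < z.im} \ K))
      (nhds (a : ℂ))) :
    0 < a := by
  obtain ⟨hKcomp, hKsub, hconn, hsimp, hclos⟩ := hK
  have hHopen : IsOpen {z : ℂ | 0 < z.im} := isOpen_lt continuous_const Complex.continuous_im
  have hSopen : IsOpen ({z : ℂ | 0 < z.im} \ K) := hHopen.sdiff hKcomp.isClosed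
  set S : Set ℂ := {z : ℂ | 0 < z.im} \ K with hSdef
  -- the inverse map
  set f : ℂ → ℂ := Function.invFunOn g S with hfdef
  have hinv : InvOn f g S {z : ℂ | 0 < z.im} := hbij.invOn_invFunOn
  have hmaps : MapsTo f {z : ℂ | 0 < z.im} S := hbij.surjOn.mapsTo_invFunOn
  have hfdiff : ∀ w ∈ {z : ℂ | 0 < z.im}, DifferentiableAt ℂ f w := fun w hw =>
    invFunOn_differentiableAt hSopen hHopen hholo hbij hw
  have hfH : MapsTo f {z : ℂ | 0 < z.im} {z : ℂ | 0 < z.im} := fun w hw => (hmaps hw).1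
  have hfdiffOn : DifferentiableOn ℂ f {z : ℂ | 0 < z.im} := fun w hw =>
    (hfdiff w hw).differentiableWithinAt
  -- the sequence i * m n going to infinity inside S
  obtain ⟨R, hR⟩ := (Metric.isBounded_iff_subset_closedBall 0).mp hKcomp.isBounded
  set N₀ : ℕ := ⌈R⌉₊ + 1 with hN₀
  set m : ℕ → ℝ := fun n => ((n + N₀ : ℕ) : ℝ) with hmdef
  have hm1 : ∀ n, 1 ≤ m n := by
    intro n
    have h : 1 ≤ n + N₀ := by rw [hN₀]; omega
    show (1:ℝ) ≤ ((n + N₀ : ℕ) : ℝ)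
    exact_mod_cast h
  have hmtop : Tendsto m atTop atTop := by
    apply tendsto_natCast_atTop_atTop.comp
    exact tendsto_add_atTop_nat N₀
  set ι : ℕ → ℂ := fun n => ((m n : ℝ) : ℂ) * Complex.I with hιdef
  have hιim : ∀ n, (ι n).im = m n := by
    intro n; rw [hιdef]; simp
  have hιabs : ∀ n, ‖ι n‖ = m n := by
    intro n; rw [hιdef]
    rw [norm_mul, Complex.norm_I, Complex.norm_real, Real.norm_eq_abs, mul_one, abs_of_pos]
    linarith [hm1 n]
  have hιS : ∀ n, ι n ∈ S := by
    intro n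
    constructor
    · show 0 < (ι n).im
      rw [hιim]; linarith [hm1 n]
    · intro hmem
      have h1 : ‖ι n‖ ≤ R := by
        have := hR hmem
        simpa [Complex.dist_eq] using this
      rw [hιabs] at h1
      have h2 : R ≤ ⌈R⌉₊ := Nat.le_ceil R
      have h3 : (⌈R⌉₊ : ℝ) + 1 ≤ m n := by
        rw [hmdef, hN₀]
        push_cast
        linarith [Nat.cast_nonneg (α := ℝ) n]
      linarith
  have hιtend : Tendsto ι atTop (comap (fun z : ℂ => ‖z‖) atTop ⊓ 𝓟 S) := by
    rw [tendsto_inf]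
    constructor
    · rw [tendsto_comap_iff]
      have heq : (fun z : ℂ => ‖z‖) ∘ ι = m := by
        funext n; exact hιabs n
      rw [heq]; exact hmtop
    · rw [tendsto_principal]
      exact Eventually.of_forall hιS
  set c : ℕ → ℂ := fun n => g (ι n) - ι n with hcdef
  have hc0 : Tendsto c atTop (nhds 0) := hnorm.comp hιtend
  have hcap' : Tendsto (fun n => ι n * c n) atTop (nhds (a : ℂ)) := hcap.comp hιtend
  have hmc : Tendsto (fun n => ((m n : ℝ) : ℂ) * c n) atTop (nhds (-(a:ℂ) * Complex.I)) := by
    have heq : (fun n => ((m n : ℝ):ℂ) * c n) = fun n => (ι n * c n) * (-Complex.I) := by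
      funext n
      rw [hιdef]
      have hII : Complex.I * Complex.I = -1 := Complex.I_mul_I
      linear_combination (((m n : ℝ):ℂ) * c n) * hII
    rw [heq]
    have := hcap'.mul_const (-Complex.I)
    convert this using 2
    ring
  have hγ : Tendsto (fun n => (c n).im) atTop (nhds 0) := by
    have h := (Complex.continuous_im.tendsto 0).comp hc0
    simp only [Function.comp_def, Complex.zero_im] at h
    exact h
  have hmγ : Tendsto (fun n => m n * (c n).im) atTop (nhds (-a)) := by
    have h1 := (Complex.continuous_im.tendsto _).comp hmc
    have h2 : (fun n => (((m n : ℝ):ℂ) * c n).im) = fun n => m n * (c n).im := by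
      funext n
      simp [Complex.mul_im]
    rw [Function.comp_def, h2] at h1
    simp only [Complex.neg_im, Complex.mul_im, Complex.ofReal_re, Complex.ofReal_im,
      Complex.I_re, Complex.I_im, mul_zero, zero_mul, mul_one, zero_add] at h1
    convert h1 using 2
    simp
  set w : ℕ → ℂ := fun n => g (ι n) with hwdef
  have hwH : ∀ n, 0 < (w n).im := fun n => hbij.mapsTo (hιS n)
  have hfw : ∀ n, f (w n) = ι n := fun n => hinv.1 (hιS n)
  have hwι : ∀ n, w n = ι n + c n := by
    intro n; rw [hwdef, hcdef]; ring
  -- limit of normSq (q - c n)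
  have hnormSqlim : ∀ q : ℂ, Tendsto (fun n => normSq (q - c n)) atTop (nhds (normSq q)) := by
    intro q
    have hcont : Continuous fun x : ℂ => normSq (q - x) :=
      Complex.continuous_normSq.comp (continuous_const.sub continuous_id)
    have h := (hcont.tendsto 0).comp hc0
    simp only [Function.comp_def, sub_zero] at h
    exact h
  -- Julia-type inequality: f does not decrease the imaginary part
  have hjulia : ∀ z ∈ {z : ℂ | 0 < z.im}, z.im ≤ (f z).im := by
    intro z hz
    have hzim : 0 < z.im := hz
    have hpim : 0 < (f z).im := hfH hz
    set p : ℂ := f z with hp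
    have hineq : ∀ n,
        (m n^2 - 2*m n*p.im + normSq p)
            * (m n^2 - 2*m n*(-z.im - (c n).im) + normSq ((starRingEnd ℂ) z - c n))
          ≤ (m n^2 - 2*m n*(z.im - (c n).im) + normSq (z - c n))
            * (m n^2 - 2*m n*(-p.im) + normSq p) := by
      intro n
      have hsp := schwarz_pick_half_plane hfdiffOn hfH hzim (hwH n)
      have e1 : f (w n) - f z = ((m n : ℝ):ℂ)*Complex.I - p := by
        rw [hfw n, hιdef, hp]
      have e2 : w n - (starRingEnd ℂ) z
          = ((m n : ℝ):ℂ)*Complex.I - ((starRingEnd ℂ) z - c n) := by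
        rw [hwι n, hιdef]; ring
      have e3 : w n - z = ((m n:ℝ):ℂ)*Complex.I - (z - c n) := by
        rw [hwι n, hιdef]; ring
      have e4 : f (w n) - (starRingEnd ℂ) (f z)
          = ((m n:ℝ):ℂ)*Complex.I - (starRingEnd ℂ) p := by
        rw [hfw n, hιdef, hp]
      rw [e1, e2, e3, e4] at hsp
      have hsq := mul_self_le_mul_self
        (mul_nonneg (norm_nonneg _) (norm_nonneg _)) hsp
      have key : ∀ x y : ℂ, (‖x‖ * ‖y‖) * (‖x‖ * ‖y‖)
          = normSq x * normSq y := by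
        intro x y
        rw [mul_mul_mul_comm, ← sq, ← sq, Complex.sq_norm, Complex.sq_norm]
      rw [key, key] at hsq
      rw [normSq_tI_sub, normSq_tI_sub, normSq_tI_sub, normSq_tI_sub] at hsq
      have i1 : ((starRingEnd ℂ) z - c n).im = -z.im - (c n).im := by
        simp [Complex.sub_im]
      have i2 : (z - c n).im = z.im - (c n).im := by simp [Complex.sub_im]
      have i3 : ((starRingEnd ℂ) p).im = -p.im := by simp
      have i4 : normSq ((starRingEnd ℂ) p) = normSq p := Complex.normSq_conj p
      rw [i1, i2, i3, i4] at hsq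
      exact hsq
    have hkey : (0:ℝ) ≤ 4*(p.im - z.im) := by
      apply nonneg_lim_of_cubic (m := m) hmtop
        (u := fun n => 8*p.im*(c n).im + normSq (z - c n) - normSq ((starRingEnd ℂ) z - c n))
        (v := fun n => 2*p.im*(normSq ((starRingEnd ℂ) z - c n) + normSq (z - c n))
                - 4*z.im*normSq p)
        (t := fun n => normSq p * (normSq (z - c n) - normSq ((starRingEnd ℂ) z - c n)))
      · exact ((hγ.const_mul (8*p.im)).add (hnormSqlim z)).sub (hnormSqlim ((starRingEnd ℂ) z))
      · exact (((hnormSqlim ((starRingEnd ℂ) z)).add (hnormSqlim z)).const_mul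
          (2*p.im)).sub tendsto_const_nhds
      · exact ((hnormSqlim z).sub (hnormSqlim ((starRingEnd ℂ) z))).const_mul (normSq p)
      · refine Eventually.of_forall fun n => ?_
        have h := hineq n
        have hid : 4*(p.im - z.im) * m n^3
              + (8*p.im*(c n).im + normSq (z - c n) - normSq ((starRingEnd ℂ) z - c n)) * m n^2
              + (2*p.im*(normSq ((starRingEnd ℂ) z - c n) + normSq (z - c n))
                  - 4*z.im*normSq p) * m n
              + normSq p * (normSq (z - c n) - normSq ((starRingEnd ℂ) z - c n))
            = (m n^2 - 2*m n*(z.im - (c n).im) + normSq (z - c n))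
                * (m n^2 - 2*m n*(-p.im) + normSq p)
              - (m n^2 - 2*m n*p.im + normSq p)
                * (m n^2 - 2*m n*(-z.im - (c n).im) + normSq ((starRingEnd ℂ) z - c n)) := by
          ring
        rw [hid]
        linarith
    linarith
  -- the holomorphic map hh = f - id has nonnegative imaginary part
  set hh : ℂ → ℂ := fun z => f z - z with hhdef
  have hhim : ∀ z ∈ {z : ℂ | 0 < z.im}, 0 ≤ (hh z).im := by
    intro z hz
    have := hjulia z hz
    simp only [hhdef, Complex.sub_im]
    linarith
  have hhdiffOn : DifferentiableOn ℂ hh {z : ℂ | 0 < z.im} :=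
    hfdiffOn.sub differentiableOn_id
  have hhwn : ∀ n, hh (w n) = -c n := by
    intro n
    show f (w n) - w n = -c n
    rw [hfw n, hwι n]; ring
  -- strict positivity of the imaginary part of hh
  have hhpos : ∀ z ∈ {z : ℂ | 0 < z.im}, 0 < (hh z).im := by
    intro z₁ hz₁
    by_contra h0
    push_neg at h0
    have hz₁im : (hh z₁).im = 0 := le_antisymm h0 (hhim z₁ hz₁)
    have hhanal : AnalyticOnNhd ℂ hh {z : ℂ | 0 < z.im} := fun z hz =>
      hhdiffOn.analyticAt (hHopen.mem_nhds hz)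
    have hpre : IsPreconnected {z : ℂ | 0 < z.im} :=
      (convex_halfSpace_im_gt 0).isPreconnected
    rcases hhanal.is_constant_or_isOpen hpre with ⟨w₀, hw₀⟩ | hopen
    · have hlim : Tendsto (fun _ : ℕ => w₀) atTop (nhds 0) := by
        have hcneg : Tendsto (fun n => -c n) atTop (nhds 0) := by simpa using hc0.neg
        refine hcneg.congr fun n => ?_
        rw [← hhwn n, hw₀ (w n) (hwH n)]
      have hw0 : w₀ = 0 := tendsto_nhds_unique tendsto_const_nhds hlim
      obtain ⟨q, hqK, hqH⟩ := hKne
      have hq0 : hh q = 0 := by rw [hw₀ q hqH, hw0]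
      have hfq : f q = q := by
        have h2 : f q - q = 0 := hq0
        exact sub_eq_zero.mp h2
      have hqS : f q ∈ S := hmaps hqH
      rw [hfq] at hqS
      exact hqS.2 hqK
    · have hio : IsOpen (hh '' {z : ℂ | 0 < z.im}) := hopen _ subset_rfl hHopen
      obtain ⟨ε, hε, hball⟩ := Metric.isOpen_iff.mp hio _ (mem_image_of_mem hh hz₁)
      have hpt : hh z₁ - ((ε/2:ℝ):ℂ)*Complex.I ∈ Metric.ball (hh z₁) ε := by
        rw [Metric.mem_ball, Complex.dist_eq]
        have e : hh z₁ - ((ε/2:ℝ):ℂ)*Complex.I - hh z₁ = -(((ε/2:ℝ):ℂ)*Complex.I) := by ring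
        rw [e, norm_neg, norm_mul, Complex.norm_I, Complex.norm_real, Real.norm_eq_abs, mul_one,
          abs_of_pos (by positivity)]
        linarith
      obtain ⟨z₂, hz₂H, hz₂⟩ := hball hpt
      have him2 : (hh z₂).im = (hh z₁).im - ε/2 := by
        rw [hz₂]
        simp [Complex.sub_im, Complex.mul_im]
      have := hhim z₂ hz₂H
      rw [him2, hz₁im] at this
      linarith
  -- final step: Schwarz–Pick applied to hh at I and w n
  have hIH : Complex.I ∈ {z : ℂ | 0 < z.im} := by
    show (0:ℝ) < Complex.I.im
    simp
  set β : ℂ := hh Complex.I with hβ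
  have hβim : 0 < β.im := hhpos Complex.I hIH
  have hhH : MapsTo hh {z : ℂ | 0 < z.im} {z : ℂ | 0 < z.im} := fun z hz => hhpos z hz
  set X : ℕ → ℝ := fun n => normSq (-c n - β) with hXdef
  set Y : ℕ → ℝ := fun n => normSq (-c n - (starRingEnd ℂ) β) with hYdef
  have hYX : ∀ n, Y n - X n = 4*β.im*(-c n).im := fun n => normSq_conj_diff
  have hXlim : Tendsto X atTop (nhds (normSq β)) := by
    have hcont : Continuous fun x : ℂ => normSq (-x - β) :=
      Complex.continuous_normSq.comp ((continuous_neg).sub continuous_const)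
    have h := (hcont.tendsto 0).comp hc0
    simp only [Function.comp_def, neg_zero, zero_sub, Complex.normSq_neg] at h
    exact h
  have hYlim : Tendsto Y atTop (nhds (normSq β)) := by
    have hcont : Continuous fun x : ℂ => normSq (-x - (starRingEnd ℂ) β) :=
      Complex.continuous_normSq.comp ((continuous_neg).sub continuous_const)
    have h := (hcont.tendsto 0).comp hc0
    simp only [Function.comp_def, neg_zero, zero_sub, Complex.normSq_neg,
      Complex.normSq_conj] at h
    exact h
  have hNlim : Tendsto (fun n => normSq (-c n)) atTop (nhds 0) := by
    have hcont : Continuous fun x : ℂ => normSq (-x) :=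
      Complex.continuous_normSq.comp continuous_neg
    have h := (hcont.tendsto 0).comp hc0
    simp only [Function.comp_def, neg_zero, Complex.normSq_zero] at h
    exact h
  have hγ' : Tendsto (fun n => (-c n).im) atTop (nhds 0) := by
    have h := hγ.neg
    rw [neg_zero] at h
    refine h.congr fun n => ?_
    simp
  have hmγ' : Tendsto (fun n => m n * (-c n).im) atTop (nhds a) := by
    have h := hmγ.neg
    rw [neg_neg] at h
    refine h.congr fun n => ?_
    simp [Complex.neg_im]
  have hineq2 : ∀ n,
      X n * ((m n + 1)^2 - 2*(m n + 1)*(-c n).im + normSq (-c n))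
        ≤ ((m n - 1)^2 - 2*(m n - 1)*(-c n).im + normSq (-c n)) * Y n := by
    intro n
    have hsp := schwarz_pick_half_plane hhdiffOn hhH hIH (hwH n)
    have e1 : hh (w n) - hh Complex.I = -c n - β := by rw [hhwn n, hβ]
    have e2 : w n - (starRingEnd ℂ) Complex.I = ((m n + 1 : ℝ):ℂ)*Complex.I - (-c n) := by
      rw [hwι n, hιdef, Complex.conj_I]
      push_cast
      ring
    have e3 : w n - Complex.I = ((m n - 1 : ℝ):ℂ)*Complex.I - (-c n) := by
      rw [hwι n, hιdef]
      push_cast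
      ring
    have e4 : hh (w n) - (starRingEnd ℂ) (hh Complex.I) = -c n - (starRingEnd ℂ) β := by
      rw [hhwn n, hβ]
    rw [e1, e2, e3, e4] at hsp
    have hsq := mul_self_le_mul_self
      (mul_nonneg (norm_nonneg _) (norm_nonneg _)) hsp
    have key : ∀ x y : ℂ, (‖x‖ * ‖y‖) * (‖x‖ * ‖y‖)
        = normSq x * normSq y := by
      intro x y
      rw [mul_mul_mul_comm, ← sq, ← sq, Complex.sq_norm, Complex.sq_norm]
    rw [key, key] at hsq
    rw [normSq_tI_sub, normSq_tI_sub] at hsq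
    exact hsq
  have hkey2 : (0:ℝ) ≤ 4*β.im*a - 2*(normSq β + normSq β) - 2*(0*(normSq β - normSq β)) := by
    apply nonneg_lim_of_linear (m := m) hmtop
      (q := fun n => m n * (Y n - X n) - 2*(Y n + X n) - 2*((-c n).im*(Y n - X n)))
      (r := fun n => (Y n - X n)*(1 + normSq (-c n)) + 2*((-c n).im*(Y n + X n)))
    · have t1 : Tendsto (fun n => 4*β.im*(m n * (-c n).im) - 2*(Y n + X n)
          - 2*((-c n).im*(Y n - X n))) atTop
          (nhds (4*β.im*a - 2*(normSq β + normSq β) - 2*(0*(normSq β - normSq β)))) :=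
        ((hmγ'.const_mul (4*β.im)).sub ((hYlim.add hXlim).const_mul 2)).sub
          ((hγ'.mul (hYlim.sub hXlim)).const_mul 2)
      refine t1.congr fun n => ?_
      rw [hYX n]
      ring
    · have t2 : Tendsto (fun n => (Y n - X n)*(1 + normSq (-c n)) + 2*((-c n).im*(Y n + X n)))
          atTop (nhds ((normSq β - normSq β)*(1 + 0) + 2*(0*(normSq β + normSq β)))) :=
        ((hYlim.sub hXlim).mul (tendsto_const_nhds.add hNlim)).add
          ((hγ'.mul (hYlim.add hXlim)).const_mul 2)
      simpa using t2
    · refine Eventually.of_forall fun n => ?_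
      have h := hineq2 n
      have hid : (m n * (Y n - X n) - 2*(Y n + X n) - 2*((-c n).im*(Y n - X n))) * m n
            + ((Y n - X n)*(1 + normSq (-c n)) + 2*((-c n).im*(Y n + X n)))
          = ((m n - 1)^2 - 2*(m n - 1)*(-c n).im + normSq (-c n)) * Y n
            - X n * ((m n + 1)^2 - 2*(m n + 1)*(-c n).im + normSq (-c n)) := by
        ring
      rw [hid]
      linarith
  have hns : normSq β = β.re^2 + β.im^2 := by
    rw [Complex.normSq_apply]
    ring
  nlinarith [sq_nonneg β.re, mul_pos hβim hβim, hβim]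
end

section
/- For ρ > 1 define the elliptic integrals K(ρ) := ∫₀¹ dt/√(t(1−t)(ρ−t)) and K'(ρ) := ∫₁^ρ dt/√(t(t−1)(ρ−t)). Then the ratio ρ ↦ K'(ρ)/K(ρ) is strictly increasing on (1,∞). (Hence the aspect ratio of the conformal rectangle is a strictly increasing function of the cross-ratio parameter ρ, so the π-extremal distance between two boundary arcs of a simply connected domain is uniquely determined.) -/
open Set Filter

/-- The elliptic integral `K(ρ) = ∫₀¹ dt/√(t(1−t)(ρ−t))`. -/
noncomputable def ellipticK (ρ : ℝ) : ℝ :=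
  ∫ t in (0:ℝ)..1, 1 / Real.sqrt (t * (1 - t) * (ρ - t))

/-- The elliptic integral `K'(ρ) = ∫₁^ρ dt/√(t(t−1)(ρ−t))`. -/
noncomputable def ellipticK' (ρ : ℝ) : ℝ :=
  ∫ t in (1:ℝ)..ρ, 1 / Real.sqrt (t * (t - 1) * (ρ - t))

open MeasureTheory intervalIntegral in
/-- `1/√t + 1/√(1-t)` is interval integrable on `[0,1]`. -/
lemma sqrtInv_intInt : IntervalIntegrable
    (fun t : ℝ => (Real.sqrt t)⁻¹ + (Real.sqrt (1 - t))⁻¹) volume 0 1 := by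
  have h1 : IntervalIntegrable (fun t : ℝ => (Real.sqrt t)⁻¹) volume 0 1 := by
    have h := intervalIntegral.intervalIntegrable_rpow' (a := 0) (b := 1)
      (r := -(1/2)) (by norm_num)
    apply h.mono_fun'
    · exact (Real.continuous_sqrt.measurable.inv).aestronglyMeasurable
    · rw [Set.uIoc_of_le (by norm_num : (0:ℝ) ≤ 1)]
      refine (MeasureTheory.ae_restrict_iff' measurableSet_Ioc).2 (Filter.Eventually.of_forall ?_)
      intro t ht
      have h0 : (0:ℝ) < t := ht.1
      have : (Real.sqrt t)⁻¹ = t ^ (-(1/2) : ℝ) := by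
        rw [Real.sqrt_eq_rpow, ← Real.rpow_neg h0.le]
      dsimp only
      rw [Real.norm_eq_abs, abs_of_nonneg (by positivity), this]
  have h2 : IntervalIntegrable (fun t : ℝ => (Real.sqrt (1 - t))⁻¹) volume 0 1 := by
    simpa using (h1.comp_sub_left 1).symm
  exact h1.add h2

open MeasureTheory intervalIntegral in
/-- Integrability of `1/√(t(1-t)w(t))` for `w` measurable and bounded below on `(0,1]`. -/
lemma intInt_aux {w : ℝ → ℝ} {m : ℝ} (hm : 0 < m) (hw : Measurable w)
    (hbd : ∀ t ∈ Set.Ioc (0:ℝ) 1, m ≤ w t) :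
    IntervalIntegrable (fun t => 1 / Real.sqrt (t * (1 - t) * w t)) volume 0 1 := by
  set C := (Real.sqrt (m / 2))⁻¹ with hCdef
  have hC0 : 0 ≤ C := by positivity
  have hint := sqrtInv_intInt.const_mul C
  apply hint.mono_fun'
  · have hmeas : Measurable fun t => Real.sqrt (t * (1 - t) * w t) :=
      Real.continuous_sqrt.measurable.comp
        ((measurable_id.mul (measurable_const.sub measurable_id)).mul hw)
    exact (measurable_const.div hmeas).aestronglyMeasurable
  · rw [Set.uIoc_of_le (by norm_num : (0:ℝ) ≤ 1)]
    refine (MeasureTheory.ae_restrict_iff' measurableSet_Ioc).2 (Filter.Eventually.of_forall ?_)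
    intro t ht
    have ht0 : (0:ℝ) < t := ht.1
    have ht1 : t ≤ 1 := ht.2
    have h1t : 0 ≤ 1 - t := by linarith
    have hwt : m ≤ w t := hbd t ht
    have hrhs : 0 ≤ C * ((Real.sqrt t)⁻¹ + (Real.sqrt (1 - t))⁻¹) := by positivity
    dsimp only
    rw [Real.norm_eq_abs, abs_of_nonneg (by positivity)]
    have key : ∀ u : ℝ, 0 < u →
        u * (m / 2) ≤ t * (1 - t) * w t →
        1 / Real.sqrt (t * (1 - t) * w t) ≤ C * (Real.sqrt u)⁻¹ := by
      intro u hu hle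
      have hsu : 0 < Real.sqrt (u * (m / 2)) := Real.sqrt_pos.2 (by positivity)
      have h1 : 1 / Real.sqrt (t * (1 - t) * w t) ≤ 1 / Real.sqrt (u * (m / 2)) :=
        one_div_le_one_div_of_le hsu (Real.sqrt_le_sqrt hle)
      have h2 : Real.sqrt (u * (m / 2)) = Real.sqrt u * Real.sqrt (m / 2) :=
        Real.sqrt_mul hu.le _
      rw [h2] at h1
      calc 1 / Real.sqrt (t * (1 - t) * w t)
          ≤ 1 / (Real.sqrt u * Real.sqrt (m / 2)) := h1
        _ = C * (Real.sqrt u)⁻¹ := by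
            rw [one_div, mul_inv, hCdef, mul_comm]
    by_cases htm : t ≤ 1/2
    · have hub : t * (m / 2) ≤ t * (1 - t) * w t := by
        nlinarith [mul_le_mul_of_nonneg_left hwt (mul_nonneg ht0.le h1t),
          mul_nonneg (mul_nonneg ht0.le hm.le) (by linarith : (0:ℝ) ≤ 1 - t - 1/2)]
      have := key t ht0 hub
      have hnn : 0 ≤ (Real.sqrt (1 - t))⁻¹ := by positivity
      calc 1 / Real.sqrt (t * (1 - t) * w t) ≤ C * (Real.sqrt t)⁻¹ := this
        _ ≤ C * ((Real.sqrt t)⁻¹ + (Real.sqrt (1 - t))⁻¹) :=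
            mul_le_mul_of_nonneg_left (le_add_of_nonneg_right hnn) hC0
    · push_neg at htm
      rcases lt_or_eq_of_le ht1 with hlt | heq
      · have h1t' : 0 < 1 - t := by linarith
        have hub : (1 - t) * (m / 2) ≤ t * (1 - t) * w t := by
          nlinarith [mul_le_mul_of_nonneg_left hwt (mul_nonneg ht0.le h1t),
            mul_nonneg (mul_nonneg h1t hm.le) (by linarith : (0:ℝ) ≤ t - 1/2)]
        have := key (1 - t) h1t' hub
        have hnn : 0 ≤ (Real.sqrt t)⁻¹ := by positivity
        calc 1 / Real.sqrt (t * (1 - t) * w t) ≤ C * (Real.sqrt (1 - t))⁻¹ := this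
          _ ≤ C * ((Real.sqrt t)⁻¹ + (Real.sqrt (1 - t))⁻¹) :=
              mul_le_mul_of_nonneg_left (le_add_of_nonneg_left hnn) hC0
      · rw [heq]
        simp only [sub_self, mul_zero, zero_mul, Real.sqrt_zero, div_zero, inv_zero,
          add_zero, Real.sqrt_one, inv_one, mul_one]
        exact hC0

/-- The key pointwise comparison. -/
lemma one_div_sqrt_mul_le {u x y c : ℝ} (hu : 0 ≤ u) (hx : 0 < x) (hy : 0 < y)
    (hc : 0 ≤ c) (h : y ≤ c ^ 2 * x) :
    1 / Real.sqrt (u * x) ≤ c * (1 / Real.sqrt (u * y)) := by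
  rcases hu.eq_or_lt with h0 | hu
  · simp [← h0]
  · have hux : 0 < Real.sqrt (u * x) := Real.sqrt_pos.2 (by positivity)
    have huy : 0 < Real.sqrt (u * y) := Real.sqrt_pos.2 (by positivity)
    rw [mul_one_div, div_le_div_iff₀ hux huy, one_mul]
    calc Real.sqrt (u * y) ≤ Real.sqrt (c ^ 2 * (u * x)) :=
          Real.sqrt_le_sqrt (by nlinarith)
      _ = c * Real.sqrt (u * x) := by
          rw [Real.sqrt_mul (sq_nonneg c), Real.sqrt_sq hc]

open MeasureTheory in
lemma Kint {ρ : ℝ} (hρ : 1 < ρ) :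
    IntervalIntegrable (fun t => 1 / Real.sqrt (t * (1 - t) * (ρ - t))) volume 0 1 :=
  intInt_aux (by linarith : (0:ℝ) < ρ - 1) (measurable_const.sub measurable_id)
    (fun t ht => by linarith [ht.2])

open MeasureTheory in
lemma Gint {ρ : ℝ} (hρ : 1 < ρ) :
    IntervalIntegrable (fun s => 1 / Real.sqrt (s * (1 - s) * (1 + (ρ - 1) * s))) volume 0 1 :=
  intInt_aux one_pos (measurable_const.add (measurable_const.mul measurable_id))
    (fun s hs => by nlinarith [hs.1])

lemma K'_eq {ρ : ℝ} (hρ : 1 < ρ) :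
    ellipticK' ρ = ∫ s in (0:ℝ)..1, 1 / Real.sqrt (s * (1 - s) * (1 + (ρ - 1) * s)) := by
  have hc : ρ - 1 ≠ 0 := by linarith
  have h := intervalIntegral.integral_comp_mul_add (a := 0) (b := 1)
    (f := fun t => 1 / Real.sqrt (t * (t - 1) * (ρ - t))) hc 1
  rw [show (ρ - 1) * 0 + 1 = 1 by ring, show (ρ - 1) * 1 + 1 = ρ by ring] at h
  have h2 : ellipticK' ρ =
      (ρ - 1) • ∫ x in (0:ℝ)..1,
        (fun t => 1 / Real.sqrt (t * (t - 1) * (ρ - t))) ((ρ - 1) * x + 1) := by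
    rw [h, smul_smul, mul_inv_cancel₀ hc, one_smul]; rfl
  rw [h2, ← intervalIntegral.integral_smul]
  apply intervalIntegral.integral_congr
  intro s hs
  rw [Set.uIcc_of_le (by norm_num : (0:ℝ) ≤ 1)] at hs
  simp only [smul_eq_mul]
  have key : ((ρ - 1) * s + 1) * (((ρ - 1) * s + 1) - 1) * (ρ - ((ρ - 1) * s + 1))
      = (ρ - 1) ^ 2 * (s * (1 - s) * (1 + (ρ - 1) * s)) := by ring
  rw [key, Real.sqrt_mul (sq_nonneg _), Real.sqrt_sq (by linarith : (0:ℝ) ≤ ρ - 1),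
    ← mul_div_assoc, mul_div_mul_left _ _ hc]

open MeasureTheory intervalIntegral in
lemma K_pos {ρ : ℝ} (hρ : 1 < ρ) : 0 < ellipticK ρ := by
  apply intervalIntegral_pos_of_pos_on (Kint hρ) _ one_pos
  intro t ht
  have : 0 < t * (1 - t) * (ρ - t) :=
    mul_pos (mul_pos ht.1 (by linarith [ht.2])) (by linarith [ht.2])
  rw [one_div]
  exact inv_pos.2 (Real.sqrt_pos.2 this)

open MeasureTheory intervalIntegral in
lemma K'_pos {ρ : ℝ} (hρ : 1 < ρ) : 0 < ellipticK' ρ := by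
  rw [K'_eq hρ]
  apply intervalIntegral_pos_of_pos_on (Gint hρ) _ one_pos
  intro s hs
  have : 0 < s * (1 - s) * (1 + (ρ - 1) * s) :=
    mul_pos (mul_pos hs.1 (by linarith [hs.2])) (by nlinarith [hs.1])
  rw [one_div]
  exact inv_pos.2 (Real.sqrt_pos.2 this)

open MeasureTheory intervalIntegral in
/-- Comparison for `K'`: `√(a/b) · K'(a) ≤ K'(b)` for `1 < a < b`. -/
lemma K'_comp {a b : ℝ} (ha : 1 < a) (hab : a < b) :
    Real.sqrt (a / b) * ellipticK' a ≤ ellipticK' b := by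
  have hb : 1 < b := ha.trans hab
  have ha0 : (0:ℝ) < a := by linarith
  have hb0 : (0:ℝ) < b := by linarith
  set c := Real.sqrt (a / b) with hcdef
  set c' := Real.sqrt (b / a) with hc'def
  have hc0 : 0 ≤ c := Real.sqrt_nonneg _
  have hc'0 : 0 ≤ c' := Real.sqrt_nonneg _
  have hcc' : c * c' = 1 := by
    rw [hcdef, hc'def, ← Real.sqrt_mul (by positivity)]
    rw [show a / b * (b / a) = 1 by field_simp]
    exact Real.sqrt_one
  rw [K'_eq ha, K'_eq hb, ← intervalIntegral.integral_const_mul]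
  apply intervalIntegral.integral_mono_on (by norm_num) ((Gint ha).const_mul c) (Gint hb)
  intro s hs
  have hs0 : 0 ≤ s := hs.1
  have hs1 : s ≤ 1 := hs.2
  have hu : 0 ≤ s * (1 - s) := mul_nonneg hs0 (by linarith)
  have hx : (0:ℝ) < 1 + (a - 1) * s := by nlinarith
  have hy : (0:ℝ) < 1 + (b - 1) * s := by nlinarith
  have hc'2 : c' ^ 2 = b / a := Real.sq_sqrt (by positivity)
  have hkey : 1 + (b - 1) * s ≤ c' ^ 2 * (1 + (a - 1) * s) := by
    rw [hc'2, div_mul_eq_mul_div, le_div_iff₀ ha0]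
    nlinarith
  have h := one_div_sqrt_mul_le hu hx hy hc'0 hkey
  have := mul_le_mul_of_nonneg_left h hc0
  calc c * (1 / Real.sqrt (s * (1 - s) * (1 + (a - 1) * s)))
      ≤ c * (c' * (1 / Real.sqrt (s * (1 - s) * (1 + (b - 1) * s)))) := this
    _ = 1 / Real.sqrt (s * (1 - s) * (1 + (b - 1) * s)) := by
        rw [← mul_assoc, hcc', one_mul]

open MeasureTheory intervalIntegral in
/-- Strict comparison for `K`: `K(b) < √(a/b) · K(a)` for `1 < a < b`. -/
lemma K_comp {a b : ℝ} (ha : 1 < a) (hab : a < b) :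
    ellipticK b < Real.sqrt (a / b) * ellipticK a := by
  have hb : 1 < b := ha.trans hab
  have ha0 : (0:ℝ) < a := by linarith
  have hb0 : (0:ℝ) < b := by linarith
  set c := Real.sqrt (a / b) with hcdef
  set c'' := Real.sqrt ((a - 1/2) / (b - 1/2)) with hc''def
  have hc0 : 0 ≤ c := Real.sqrt_nonneg _
  have hc''0 : 0 ≤ c'' := Real.sqrt_nonneg _
  have hc2 : c ^ 2 = a / b := Real.sq_sqrt (by positivity)
  have hc''2 : c'' ^ 2 = (a - 1/2) / (b - 1/2) := Real.sq_sqrt (by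
    apply div_nonneg <;> linarith)
  have hc''c : c'' < c := by
    rw [hcdef, hc''def]
    apply Real.sqrt_lt_sqrt (by apply div_nonneg <;> linarith)
    rw [div_lt_div_iff₀ (by linarith) hb0]
    nlinarith
  -- integrability on subintervals
  have hIa : IntervalIntegrable (fun t => 1 / Real.sqrt (t * (1 - t) * (a - t))) volume 0 1 :=
    Kint ha
  have hIb : IntervalIntegrable (fun t => 1 / Real.sqrt (t * (1 - t) * (b - t))) volume 0 1 :=
    Kint hb
  have hsub1 : Set.uIcc (0:ℝ) (1/2) ⊆ Set.uIcc (0:ℝ) 1 := by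
    apply Set.uIcc_subset_uIcc <;> simp [Set.mem_uIcc] <;> norm_num
  have hsub2 : Set.uIcc (1/2 : ℝ) 1 ⊆ Set.uIcc (0:ℝ) 1 := by
    apply Set.uIcc_subset_uIcc <;> simp [Set.mem_uIcc] <;> norm_num
  have hIa1 := hIa.mono_set hsub1
  have hIa2 := hIa.mono_set hsub2
  have hIb1 := hIb.mono_set hsub1
  have hIb2 := hIb.mono_set hsub2
  -- pointwise bounds
  have hbd1 : ∀ t ∈ Set.Icc (0:ℝ) (1/2),
      1 / Real.sqrt (t * (1 - t) * (b - t)) ≤ c * (1 / Real.sqrt (t * (1 - t) * (a - t))) := by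
    intro t ht
    have ht0 : 0 ≤ t := ht.1
    have ht1 : t ≤ 1/2 := ht.2
    apply one_div_sqrt_mul_le (mul_nonneg ht0 (by linarith)) (by linarith) (by linarith) hc0
    rw [hc2, div_mul_eq_mul_div, le_div_iff₀ hb0]
    nlinarith
  have hbd2 : ∀ t ∈ Set.Icc (1/2 : ℝ) 1,
      1 / Real.sqrt (t * (1 - t) * (b - t)) ≤ c'' * (1 / Real.sqrt (t * (1 - t) * (a - t))) := by
    intro t ht
    have ht0 : 1/2 ≤ t := ht.1
    have ht1 : t ≤ 1 := ht.2
    apply one_div_sqrt_mul_le (mul_nonneg (by linarith) (by linarith)) (by linarith)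
      (by linarith) hc''0
    rw [hc''2, div_mul_eq_mul_div, le_div_iff₀ (by linarith)]
    nlinarith
  have hsplitb : ellipticK b = (∫ t in (0:ℝ)..(1/2), 1 / Real.sqrt (t * (1 - t) * (b - t)))
      + ∫ t in (1/2 : ℝ)..1, 1 / Real.sqrt (t * (1 - t) * (b - t)) :=
    (intervalIntegral.integral_add_adjacent_intervals hIb1 hIb2).symm
  have hsplita : ellipticK a = (∫ t in (0:ℝ)..(1/2), 1 / Real.sqrt (t * (1 - t) * (a - t)))
      + ∫ t in (1/2 : ℝ)..1, 1 / Real.sqrt (t * (1 - t) * (a - t)) :=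
    (intervalIntegral.integral_add_adjacent_intervals hIa1 hIa2).symm
  have hpos2 : 0 < ∫ t in (1/2 : ℝ)..1, 1 / Real.sqrt (t * (1 - t) * (a - t)) := by
    apply intervalIntegral_pos_of_pos_on hIa2 _ (by norm_num)
    intro t ht
    have : 0 < t * (1 - t) * (a - t) :=
      mul_pos (mul_pos (by linarith [ht.1] : (0:ℝ) < t) (by linarith [ht.2]))
        (by linarith [ht.2])
    rw [one_div]
    exact inv_pos.2 (Real.sqrt_pos.2 this)
  have h1 : (∫ t in (0:ℝ)..(1/2), 1 / Real.sqrt (t * (1 - t) * (b - t)))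
      ≤ c * ∫ t in (0:ℝ)..(1/2), 1 / Real.sqrt (t * (1 - t) * (a - t)) := by
    rw [← intervalIntegral.integral_const_mul]
    exact intervalIntegral.integral_mono_on (by norm_num) hIb1 (hIa1.const_mul c) hbd1
  have h2 : (∫ t in (1/2 : ℝ)..1, 1 / Real.sqrt (t * (1 - t) * (b - t)))
      ≤ c'' * ∫ t in (1/2 : ℝ)..1, 1 / Real.sqrt (t * (1 - t) * (a - t)) := by
    rw [← intervalIntegral.integral_const_mul]
    exact intervalIntegral.integral_mono_on (by norm_num) hIb2 (hIa2.const_mul c'') hbd2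
  have h3 : c'' * (∫ t in (1/2 : ℝ)..1, 1 / Real.sqrt (t * (1 - t) * (a - t)))
      < c * ∫ t in (1/2 : ℝ)..1, 1 / Real.sqrt (t * (1 - t) * (a - t)) :=
    mul_lt_mul_of_pos_right hc''c hpos2
  rw [hsplitb, hsplita, mul_add]
  calc (∫ t in (0:ℝ)..(1/2), 1 / Real.sqrt (t * (1 - t) * (b - t)))
        + (∫ t in (1/2 : ℝ)..1, 1 / Real.sqrt (t * (1 - t) * (b - t)))
      ≤ (c * ∫ t in (0:ℝ)..(1/2), 1 / Real.sqrt (t * (1 - t) * (a - t)))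
        + c'' * ∫ t in (1/2 : ℝ)..1, 1 / Real.sqrt (t * (1 - t) * (a - t)) := add_le_add h1 h2
    _ < (c * ∫ t in (0:ℝ)..(1/2), 1 / Real.sqrt (t * (1 - t) * (a - t)))
        + c * ∫ t in (1/2 : ℝ)..1, 1 / Real.sqrt (t * (1 - t) * (a - t)) :=
          add_lt_add_right h3 _

/-- The aspect ratio `K'(ρ)/K(ρ)` of the conformal rectangle is a strictly increasing
function of the cross-ratio parameter `ρ ∈ (1,∞)`; hence the π-extremal distance between
two boundary arcs of a simply connected domain is uniquely determined. -/
theorem aspect_ratio_strictMono :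
    StrictMonoOn (fun ρ => ellipticK' ρ / ellipticK ρ) (Ioi (1:ℝ)) := by
  intro a ha b hb hab
  simp only [Set.mem_Ioi] at ha hb
  have hKa := K_pos ha
  have hKb := K_pos hb
  have hK'a := K'_pos ha
  simp only
  rw [div_lt_div_iff₀ hKa hKb]
  calc ellipticK' a * ellipticK b
      < ellipticK' a * (Real.sqrt (a / b) * ellipticK a) :=
        mul_lt_mul_of_pos_left (K_comp ha hab) hK'a
    _ = (Real.sqrt (a / b) * ellipticK' a) * ellipticK a := by ring
    _ ≤ ellipticK' b * ellipticK a :=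
        mul_le_mul_of_nonneg_right (K'_comp ha hab) hKa.le
end
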